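/- arXiv:1712.10216 — 4 statements merged into one kernel-verified Lean document; each statement's English description precedes it below -/
import Mathlib

section
/- Let $R$ be a Noetherian commutative ring, let $U \subseteq \operatorname{Spec} R$ be a dense open subset (for the Zariski topology), and let $\mathfrak{p}$ be a prime ideal of $R$ with $\mathfrak{p} \notin U$. Then there exists a prime ideal $\mathfrak{q} \in U$ with $\mathfrak{q} \subsetneq \mathfrak{p}$ such that there is no prime ideal $\mathfrak{r}$ with $\mathfrak{q} \subsetneq \mathfrak{r} \subsetneq \mathfrak{p}$. -/
section ArtinianAux
variable {B : Type*} [CommRing B]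

lemma artinian_of_simpleorder {M : Type*} [AddCommGroup M] [Module B M]
    [IsSimpleModule B M] : IsArtinian B M := by
  have : Finite (Submodule B M) := by
    refine Finite.of_injective (fun N => (N = ⊤ : Prop)) ?_
    intro N N' h
    rcases eq_bot_or_eq_top N with h1 | h1 <;> rcases eq_bot_or_eq_top N' with h2 | h2 <;>
      simp_all
  exact Finite.to_wellFoundedLT

/-- A Noetherian module killed by a maximal ideal is Artinian. -/
lemma isArtinian_of_killed {J : Ideal B} (hJ : J.IsMaximal)
    (M : Type*) [AddCommGroup M] [Module B M] [IsNoetherian B M]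
    (hkill : ∀ j ∈ J, ∀ m : M, j • m = 0) : IsArtinian B M := by
  classical
  have hsimple : IsSimpleModule B (B ⧸ (J : Submodule B B)) :=
    isSimpleModule_iff_isCoatom.mpr hJ.out
  have hQart : IsArtinian B (B ⧸ (J : Submodule B B)) := artinian_of_simpleorder
  have hsingle : ∀ a : M, IsArtinian B (Submodule.span B {a} : Submodule B M) := by
    intro a
    have hker : (J : Submodule B B) ≤ LinearMap.ker (LinearMap.toSpanSingleton B M a) :=
      fun j hj => by simp [LinearMap.mem_ker, hkill j hj a]
    set ψ := Submodule.liftQ (J : Submodule B B) (LinearMap.toSpanSingleton B M a) hker with hψ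
    have hr : LinearMap.range ψ = Submodule.span B {a} := by
      rw [hψ, Submodule.range_liftQ, ← LinearMap.span_singleton_eq_range]
    have : IsArtinian B (LinearMap.range ψ) :=
      isArtinian_of_surjective _ ψ.rangeRestrict ψ.surjective_rangeRestrict
    rwa [hr] at this
  have hsup : ∀ (N N' : Submodule B M), IsArtinian B N → IsArtinian B N' →
      IsArtinian B (N ⊔ N' : Submodule B M) := by
    intro N N' h1 h2
    have : IsArtinian B (N × N') := inferInstance
    set f := (N.subtype).coprod (N'.subtype) with hf
    have hr : LinearMap.range f = N ⊔ N' := by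
      rw [hf, LinearMap.range_coprod, Submodule.range_subtype, Submodule.range_subtype]
    have : IsArtinian B (LinearMap.range f) :=
      isArtinian_of_surjective _ f.rangeRestrict f.surjective_rangeRestrict
    rwa [hr] at this
  obtain ⟨s, hs⟩ := IsNoetherian.noetherian (⊤ : Submodule B M)
  have hfin : ∀ t : Finset M, IsArtinian B (Submodule.span B (t : Set M) : Submodule B M) := by
    intro t
    induction t using Finset.induction_on with
    | empty => rw [Finset.coe_empty, Submodule.span_empty]; infer_instance
    | @insert a t ha ih =>
        rw [Finset.coe_insert, Submodule.span_insert]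
        exact hsup _ _ (hsingle _) ih
  have htop : IsArtinian B (⊤ : Submodule B M) := hs ▸ hfin s
  rwa [← Submodule.topEquiv.isArtinian_iff]

/-- A Noetherian ring with a nilpotent maximal ideal is Artinian. -/
lemma isArtinianRing_of_nilpotent_maximal [IsNoetherianRing B] {J : Ideal B}
    (hJ : J.IsMaximal) {k : ℕ} (hk : J ^ k = ⊥) : IsArtinianRing B := by
  suffices h : ∀ (k : ℕ) (M : Type _) (_ : AddCommGroup M) (_ : Module B M)
      (_ : IsNoetherian B M), (J ^ k • (⊤ : Submodule B M) = ⊥) → IsArtinian B M by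
    refine h k B inferInstance inferInstance inferInstance ?_
    rw [Ideal.smul_eq_mul, Ideal.mul_top]; exact hk
  intro k
  induction k with
  | zero =>
      intro M _ _ _ hM
      rw [pow_zero, Ideal.one_eq_top, Submodule.top_smul] at hM
      have : Subsingleton M := subsingleton_of_forall_eq 0 fun m => by
        have : m ∈ (⊤ : Submodule B M) := Submodule.mem_top
        rw [hM] at this; simpa using this
      infer_instance
  | succ k ih =>
      intro M _ _ _ hM
      set N : Submodule B M := J ^ k • ⊤ with hN
      -- quotient is Artinian by IH
      have hquot : IsArtinian B (M ⧸ N) := by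
        refine ih (M ⧸ N) inferInstance inferInstance inferInstance ?_
        have : (⊤ : Submodule B (M ⧸ N)) = Submodule.map N.mkQ ⊤ := by
          rw [Submodule.map_top, Submodule.range_mkQ]
        rw [this, ← Submodule.map_smul'']
        rw [eq_bot_iff, Submodule.map_le_iff_le_comap, Submodule.comap_bot, Submodule.ker_mkQ]
      -- N is killed by J
      have hkill : ∀ j ∈ J, ∀ m : (N : Submodule B M), j • m = 0 := by
        intro j hj m
        have : j • (m : M) = 0 := by
          have h1 : j • (m : M) ∈ (J • N : Submodule B M) :=
            Submodule.smul_mem_smul hj m.2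
          have h2 : (J • N : Submodule B M) = ⊥ := by
            rw [hN, ← mul_smul, ← pow_succ']
            exact hM
          rw [h2] at h1; simpa using h1
        exact Subtype.ext (by simpa using this)
      have hNart : IsArtinian B (N : Submodule B M) := isArtinian_of_killed hJ _ hkill
      exact (isArtinian_iff_submodule_quotient N).mpr ⟨hNart, hquot⟩

end ArtinianAux

section PIT
open IsLocalRing

/-- Krull's principal ideal theorem (local, height-one form). -/
lemma pit_local (A : Type*) [CommRing A] [IsNoetherianRing A] [IsLocalRing A]
    {x : A} (hxm : x ∈ maximalIdeal A)
    (hx : ∀ t : Ideal A, t.IsPrime → x ∈ t → t = maximalIdeal A)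
    {P : Ideal A} (hP : P.IsPrime) (hPm : P ≠ maximalIdeal A)
    {s : Ideal A} (hs : s.IsPrime) (hsP : s ≤ P) : P ≤ s := by
  have hxP : x ∉ P := fun h => hPm (hx P hP h)
  -- the quotient B = A/(x) is Artinian
  set mk := Ideal.Quotient.mk (Ideal.span {x}) with hmk
  have hsurj : Function.Surjective mk := Ideal.Quotient.mk_surjective
  have hker : RingHom.ker mk = Ideal.span {x} := Ideal.mk_ker
  set B := A ⧸ Ideal.span {x} with hB
  set J : Ideal B := (maximalIdeal A).map mk with hJ
  have hspan_le : Ideal.span {x} ≤ maximalIdeal A := by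
    rwa [Ideal.span_le, Set.singleton_subset_iff]
  have hcomapJ : J.comap mk = maximalIdeal A := by
    rw [hJ, Ideal.comap_map_of_surjective mk hsurj, ← RingHom.ker_eq_comap_bot, hker,
      sup_eq_left.mpr hspan_le]
  have hJne : J ≠ ⊤ := by
    intro h
    have := hcomapJ
    rw [h, Ideal.comap_top] at this
    exact (maximalIdeal.isMaximal A).ne_top this.symm
  have hJmax : J.IsMaximal := by
    rw [Ideal.isMaximal_def]
    refine ⟨hJne, fun K hK => ?_⟩
    have h1 : J.comap mk ≤ K.comap mk := Ideal.comap_mono hK.le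
    have h2 : J.comap mk ≠ K.comap mk := by
      intro h
      have := congrArg (Ideal.map mk) h
      rw [Ideal.map_comap_of_surjective mk hsurj, Ideal.map_comap_of_surjective mk hsurj] at this
      exact hK.ne this
    have h3 : K.comap mk = ⊤ :=
      ((maximalIdeal.isMaximal A).out).2 _ (lt_of_le_of_ne (hcomapJ ▸ h1) (hcomapJ ▸ h2))
    have := congrArg (Ideal.map mk) h3
    rwa [Ideal.map_comap_of_surjective mk hsurj, Ideal.map_top] at this
  have hprimes : ∀ t : Ideal B, t.IsPrime → t = J := by
    intro t ht
    have hc : (t.comap mk).IsPrime := ht.comap mk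
    have hxc : x ∈ t.comap mk := by
      rw [Ideal.mem_comap, hmk, Ideal.Quotient.eq_zero_iff_mem.mpr
        (Ideal.subset_span (Set.mem_singleton x))]
      exact t.zero_mem
    have := hx _ hc hxc
    have h2 := congrArg (Ideal.map mk) this
    rwa [Ideal.map_comap_of_surjective mk hsurj] at h2
  obtain ⟨k, hk⟩ : IsNilpotent (nilradical B) := IsNoetherianRing.isNilpotent_nilradical B
  have hnil : nilradical B = J := by
    rw [nilradical_eq_sInf]
    have : {I : Ideal B | I.IsPrime} = {J} := by
      ext t
      exact ⟨fun ht => hprimes t ht, fun ht => ht ▸ hJmax.isPrime⟩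
    rw [this, sInf_singleton]
  rw [hnil] at hk
  have hart : IsArtinianRing B := isArtinianRing_of_nilpotent_maximal hJmax hk
  -- symbolic powers of P
  set L := Localization.AtPrime P with hL
  set alg := algebraMap A L with halg
  set N := maximalIdeal L with hN
  have hNP : N = P.map alg := (Localization.AtPrime.map_eq_maximalIdeal).symm
  set Q : ℕ → Ideal A := fun n => (N ^ n).comap alg with hQ
  have hQanti : ∀ {a b : ℕ}, a ≤ b → Q b ≤ Q a :=
    fun hab => Ideal.comap_mono (Ideal.pow_le_pow_right hab)
  -- stabilization via the Artinian quotient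
  have hstab : ∃ n, Q n = Q (n + 1) := by
    set f : ℕ →o (Ideal B)ᵒᵈ :=
      ⟨fun n => (Q n).map mk, fun a b hab => Ideal.map_mono (hQanti hab)⟩ with hf
    obtain ⟨n, hn⟩ := IsArtinian.monotone_stabilizes f
    have hmapeq : (Q n).map mk = (Q (n + 1)).map mk := hn (n + 1) (Nat.le_succ n)
    have hcom := congrArg (Ideal.comap mk) hmapeq
    rw [Ideal.comap_map_of_surjective mk hsurj, Ideal.comap_map_of_surjective mk hsurj,
      ← RingHom.ker_eq_comap_bot, hker] at hcom
    -- Q n ≤ Q (n+1) ⊔ m • Q n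
    refine ⟨n, le_antisymm ?_ (hQanti (Nat.le_succ n))⟩
    have hkey : Q n ≤ Q (n + 1) ⊔ (maximalIdeal A) • (Q n) := by
      intro a ha
      have h1 : a ∈ Q (n + 1) ⊔ Ideal.span {x} := by
        rw [← hcom]; exact Submodule.mem_sup_left ha
      obtain ⟨b, hb, w, hw, hbw⟩ := Submodule.mem_sup.mp h1
      obtain ⟨z, hz⟩ := Ideal.mem_span_singleton'.mp hw
      have hwQ : z * x ∈ Q n := by
        rw [hz]
        have : w = a - b := by rw [← hbw]; ring
        rw [this]
        exact Submodule.sub_mem _ ha (hQanti (Nat.le_succ n) hb)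
      have hzQ : z ∈ Q n := by
        have hux : IsUnit (alg x) := IsLocalization.map_units L (⟨x, hxP⟩ : P.primeCompl)
        obtain ⟨u, hu⟩ := hux
        have h2 : alg (z * x) ∈ N ^ n := hwQ
        rw [map_mul] at h2
        have h3 : alg z = (alg z * alg x) * ↑u⁻¹ := by
          rw [mul_assoc, ← hu, Units.mul_inv, mul_one]
        rw [hQ, Ideal.mem_comap, h3]
        exact Ideal.mul_mem_right _ _ h2
      rw [← hbw]
      refine Submodule.add_mem _ (Submodule.mem_sup_left hb) (Submodule.mem_sup_right ?_)
      rw [← hz, Ideal.smul_eq_mul]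
      have := Ideal.mul_mem_mul hxm hzQ
      rwa [mul_comm z x]
    have hjac : maximalIdeal A ≤ Ideal.jacobson ⊥ := by
      rw [IsLocalRing.jacobson_eq_maximalIdeal ⊥ bot_ne_top]
    have := Submodule.sup_eq_sup_smul_of_le_smul_of_le_jacobson
      (IsNoetherian.noetherian (Q n)) hjac hkey
    rw [Submodule.bot_smul, sup_bot_eq] at this
    rw [sup_comm] at this
    exact sup_eq_right.mp this
  obtain ⟨n, hn⟩ := hstab
  -- N^n = N^(n+1), hence N^n = ⊥ by Nakayama in L
  have hNn : N ^ n = N ^ (n + 1) := by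
    have h1 := congrArg (Ideal.map alg) hn
    rwa [hQ, IsLocalization.map_comap P.primeCompl L, IsLocalization.map_comap P.primeCompl L]
      at h1
  have hLnoeth : IsNoetherianRing L := IsLocalization.isNoetherianRing P.primeCompl L ‹_›
  have hNbot : N ^ n = ⊥ := by
    refine Submodule.eq_bot_of_le_smul_of_le_jacobson_bot N (N ^ n)
      (IsNoetherian.noetherian _) ?_ ?_
    · rw [Ideal.smul_eq_mul, ← pow_succ']
      exact le_of_eq hNn
    · rw [IsLocalRing.jacobson_eq_maximalIdeal ⊥ bot_ne_top]
  -- conclude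
  intro a haP
  have h1 : alg a ∈ N := by rw [hNP]; exact Ideal.mem_map_of_mem _ haP
  have h2 : (alg a) ^ n ∈ N ^ n := Ideal.pow_mem_pow h1 n
  rw [hNbot] at h2
  have h3 : alg (a ^ n) = 0 := by rw [map_pow]; simpa using h2
  obtain ⟨u, hu⟩ := (IsLocalization.map_eq_zero_iff P.primeCompl L (a ^ n)).mp h3
  have hus : (u : A) ∉ s := fun h => u.2 (hsP h)
  have h4 : (u : A) * a ^ n ∈ s := by rw [hu]; exact s.zero_mem
  have h5 : a ^ n ∈ s := (hs.mem_or_mem h4).resolve_left hus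
  exact hs.mem_of_pow_mem n h5

end PIT

/-- Relative Krull principal ideal theorem: if `Q` is minimal over `q ⊔ (y)`
(among primes below `Q`), then there is no prime strictly between `q` and `Q`. -/
lemma pit_between {R : Type*} [CommRing R] [IsNoetherianRing R]
    {q Q : Ideal R} (hq : q.IsPrime) (hQ : Q.IsPrime) {y : R} (hyQ : y ∈ Q) (hqQ : q ≤ Q)
    (hmin : ∀ t : Ideal R, t.IsPrime → q ⊔ Ideal.span {y} ≤ t → t ≤ Q → t = Q)
    {c : Ideal R} (hc : c.IsPrime) (hqc : q < c) (hcQ : c < Q) : False := by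
  haveI := hq
  set mk := Ideal.Quotient.mk q with hmk
  have hsurj : Function.Surjective mk := Ideal.Quotient.mk_surjective
  have hker : RingHom.ker mk = q := Ideal.mk_ker
  set Q' : Ideal (R ⧸ q) := Q.map mk with hQ'
  haveI hQ'p : Q'.IsPrime := Ideal.map_isPrime_of_surjective hsurj (hker.le.trans hqQ)
  set A := Localization.AtPrime Q' with hA
  set alg2 := algebraMap (R ⧸ q) A with halg2
  have hle : Q'.primeCompl ≤ nonZeroDivisors (R ⧸ q) := Q'.primeCompl_le_nonZeroDivisors
  haveI : IsDomain A := IsLocalization.isDomain_of_le_nonZeroDivisors _ hle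
  have hinj : Function.Injective alg2 := IsLocalization.injective A hle
  haveI : IsNoetherianRing A :=
    IsLocalization.isNoetherianRing Q'.primeCompl A inferInstance
  -- x := image of y
  set x : A := alg2 (mk y) with hxdef
  have hmapmax : Q'.map alg2 = IsLocalRing.maximalIdeal A :=
    Localization.AtPrime.map_eq_maximalIdeal
  have hcomapmax : (IsLocalRing.maximalIdeal A).comap alg2 = Q' :=
    Localization.AtPrime.comap_maximalIdeal
  have hxm : x ∈ IsLocalRing.maximalIdeal A := by
    rw [← hmapmax]
    exact Ideal.mem_map_of_mem _ (Ideal.mem_map_of_mem _ hyQ)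
  -- every prime of A containing x is the maximal ideal
  have hx : ∀ t' : Ideal A, t'.IsPrime → x ∈ t' → t' = IsLocalRing.maximalIdeal A := by
    intro t' ht' hxt'
    haveI := ht'
    set t1 := t'.comap alg2 with ht1
    haveI : t1.IsPrime := ht'.comap alg2
    set t := t1.comap mk with ht
    have htp : t.IsPrime := (inferInstance : t1.IsPrime).comap mk
    have hqt : q ≤ t := fun a haq => by
      show mk a ∈ t1
      rw [show mk a = 0 from Ideal.Quotient.eq_zero_iff_mem.mpr haq]
      exact t1.zero_mem
    have hyt : y ∈ t := hxt'
    have htQ : t ≤ Q := by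
      have h1 : t' ≤ IsLocalRing.maximalIdeal A :=
        IsLocalRing.le_maximalIdeal ht'.ne_top
      have h2 : t1 ≤ Q' := hcomapmax ▸ Ideal.comap_mono h1
      have h3 : t ≤ Q'.comap mk := Ideal.comap_mono h2
      rwa [hQ', Ideal.comap_map_of_surjective mk hsurj, ← RingHom.ker_eq_comap_bot, hker,
        sup_eq_left.mpr hqQ] at h3
    have htQeq : t = Q := hmin t htp (sup_le hqt (by rwa [Ideal.span_le, Set.singleton_subset_iff])) htQ
    have ht1Q' : t1 = Q' := by
      have := congrArg (Ideal.map mk) htQeq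
      rwa [ht, Ideal.map_comap_of_surjective mk hsurj] at this
    have := congrArg (Ideal.map alg2) ht1Q'
    rwa [ht1, IsLocalization.map_comap Q'.primeCompl A, hmapmax] at this
  -- transfer c
  set c1 : Ideal (R ⧸ q) := c.map mk with hc1
  haveI hc1p : c1.IsPrime := Ideal.map_isPrime_of_surjective hsurj (hker.le.trans hqc.le)
  have hc1Q' : c1 ≤ Q' := Ideal.map_mono hcQ.le
  have hdisj : Disjoint (Q'.primeCompl : Set (R ⧸ q)) (c1 : Set (R ⧸ q)) :=
    Set.disjoint_left.mpr fun u hu huc => hu (hc1Q' huc)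
  set c' : Ideal A := c1.map alg2 with hc'
  have hc'p : c'.IsPrime :=
    IsLocalization.isPrime_of_isPrime_disjoint Q'.primeCompl A c1 hc1p hdisj
  have hcomapc' : c'.comap alg2 = c1 :=
    IsLocalization.comap_map_of_isPrime_disjoint Q'.primeCompl A hc1p hdisj
  have hc'ne : c' ≠ IsLocalRing.maximalIdeal A := by
    intro h
    have : c1 = Q' := by rw [← hcomapc', h, hcomapmax]
    have h2 := congrArg (Ideal.comap mk) this
    rw [hc1, hQ', Ideal.comap_map_of_surjective mk hsurj, Ideal.comap_map_of_surjective mk hsurj,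
      ← RingHom.ker_eq_comap_bot, hker, sup_eq_left.mpr hqc.le, sup_eq_left.mpr hqQ] at h2
    exact hcQ.ne h2
  -- apply the local PIT with s = ⊥
  have hbot : (⊥ : Ideal A).IsPrime := Ideal.bot_prime
  have hfin : c' ≤ ⊥ := pit_local A hxm hx hc'p hc'ne hbot bot_le
  have hc'bot : c' = ⊥ := le_bot_iff.mp hfin
  have hc1bot : c1 = ⊥ := by
    rw [← hcomapc', hc'bot, ← RingHom.ker_eq_comap_bot,
      (RingHom.injective_iff_ker_eq_bot alg2).mp hinj]
  have : c ≤ q := by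
    have := (Ideal.map_eq_bot_iff_le_ker mk).mp hc1bot
    rwa [hker] at this
  exact (lt_irrefl q) (lt_of_lt_of_le hqc this)

theorem stmt1_aux (R : Type*) [CommRing R] [IsNoetherianRing R]
    (U : Set (PrimeSpectrum R)) (hUopen : IsOpen U) (hUdense : Dense U)
    (p : PrimeSpectrum R) (hp : p ∉ U) :
    ∃ q ∈ U, q.asIdeal < p.asIdeal ∧
      ∀ r : PrimeSpectrum R, ¬ (q.asIdeal < r.asIdeal ∧ r.asIdeal < p.asIdeal) := by
  classical
  haveI hpprime : p.asIdeal.IsPrime := p.2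
  -- Step A: some minimal prime below p lies in U
  obtain ⟨q₀, hq₀min, hq₀p⟩ := Ideal.exists_minimalPrimes_le (bot_le : ⊥ ≤ p.asIdeal)
  have hq₀prime : q₀.IsPrime := hq₀min.1.1
  have hq₀minP : q₀ ∈ minimalPrimes R := hq₀min
  set q₀pt : PrimeSpectrum R := ⟨q₀, hq₀prime⟩ with hq₀pt
  have hfinmin : (minimalPrimes R).Finite := minimalPrimes.finite_of_isNoetherianRing R
  set W : Set (PrimeSpectrum R) :=
    (⋃ t ∈ minimalPrimes R \ {q₀}, PrimeSpectrum.zeroLocus (t : Set R))ᶜ with hW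
  have hWopen : IsOpen W := by
    rw [hW, isOpen_compl_iff]
    exact Set.Finite.isClosed_biUnion (hfinmin.subset Set.diff_subset)
      fun t _ => PrimeSpectrum.isClosed_zeroLocus _
  have hq₀W : q₀pt ∈ W := by
    rw [hW, Set.mem_compl_iff]
    intro h
    obtain ⟨t, ht, htz⟩ := Set.mem_iUnion₂.mp h
    have hle : t ≤ q₀ := (PrimeSpectrum.mem_zeroLocus _ _).mp htz
    have := hq₀min.2 ⟨ht.1.1.1, bot_le⟩ hle
    exact ht.2 (le_antisymm hle this)
  obtain ⟨r₀, hr₀W, hr₀U⟩ := hUdense.inter_open_nonempty W hWopen ⟨q₀pt, hq₀W⟩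
  have hq₀r₀ : q₀ ≤ r₀.asIdeal := by
    haveI := r₀.2
    obtain ⟨t, htmin, htr⟩ := Ideal.exists_minimalPrimes_le (bot_le : ⊥ ≤ r₀.asIdeal)
    have : t = q₀ := by
      by_contra hne
      exact hr₀W (Set.mem_biUnion ⟨htmin, hne⟩ ((PrimeSpectrum.mem_zeroLocus _ _).mpr htr))
    exact this ▸ htr
  have hq₀U : q₀pt ∈ U :=
    ((PrimeSpectrum.le_iff_specializes q₀pt r₀).mp hq₀r₀).mem_open hUopen hr₀U
  -- Step B: a maximal element of the primes in U below p
  set T : Set (Ideal R) := {I | ∃ h : I.IsPrime, (⟨I, h⟩ : PrimeSpectrum R) ∈ U ∧ I ≤ p.asIdeal}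
    with hT
  obtain ⟨q, hqT, hqmax⟩ :=
    (set_has_maximal_iff_noetherian.mpr inferInstance) T ⟨q₀, hq₀prime, hq₀U, hq₀p⟩
  obtain ⟨hqprime, hqU, hqle⟩ := hqT
  have hqp : q < p.asIdeal := by
    refine lt_of_le_of_ne hqle fun h => hp ?_
    have : (⟨q, hqprime⟩ : PrimeSpectrum R) = p := PrimeSpectrum.ext h
    exact this ▸ hqU
  refine ⟨⟨q, hqprime⟩, hqU, hqp, ?_⟩
  rintro r ⟨h1, h2⟩
  -- a basic open around q inside U
  obtain ⟨v, ⟨g, hgv⟩, hqv, hvU⟩ :=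
    PrimeSpectrum.isTopologicalBasis_basic_opens.exists_subset_of_mem_open hqU hUopen
  have hgq : g ∉ q := by
    rw [← hgv] at hqv
    exact (PrimeSpectrum.mem_basicOpen g _).mp hqv
  have hall : ∀ t : Ideal R, t.IsPrime → q < t → t ≤ p.asIdeal → g ∈ t := by
    intro t ht hqt htp
    by_contra hg
    have htU : (⟨t, ht⟩ : PrimeSpectrum R) ∈ U := by
      apply hvU; rw [← hgv]; exact (PrimeSpectrum.mem_basicOpen g _).mpr hg
    exact hqmax t ⟨ht, htU, htp⟩ hqt
  have hgr : g ∈ r.asIdeal := hall _ r.2 h1 h2.le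
  have hgp : g ∈ p.asIdeal := hall _ p.2 hqp le_rfl
  -- the finitely many primes minimal over q + (g) below p
  set M : Set (Ideal R) := {t | t ∈ Ideal.minimalPrimes (q ⊔ Ideal.span {g}) ∧ t ≤ p.asIdeal} with hM
  have hMfin : M.Finite := by
    refine Set.Finite.subset ?_ (fun t ht => ht.1)
    rw [Ideal.minimalPrimes_eq_comap]
    exact (minimalPrimes.finite_of_isNoetherianRing _).image _
  have hMlt : ∀ t ∈ M, t < p.asIdeal := by
    rintro t ⟨htmin, htle⟩
    refine lt_of_le_of_ne htle fun h => ?_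
    have hrge : q ⊔ Ideal.span {g} ≤ r.asIdeal :=
      sup_le h1.le ((Ideal.span_singleton_le_iff_mem _).mpr hgr)
    have := htmin.2 ⟨r.2, hrge⟩ (h ▸ h2.le)
    exact absurd (h ▸ this : p.asIdeal ≤ r.asIdeal) (not_le_of_gt h2)
  -- prime avoidance: pick y in p avoiding q and all primes in M
  have havoid : ∃ y ∈ p.asIdeal, y ∉ q ∧ ∀ t ∈ M, y ∉ t := by
    set s : Finset (Ideal R) := insert q hMfin.toFinset with hs
    have hnotsub : ¬ ((p.asIdeal : Set R) ⊆ ⋃ i ∈ (↑s : Set (Ideal R)), (i : Set R)) := by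
      rw [Ideal.subset_union_prime q q (fun i hi hia _ => by
        rw [hs, Finset.mem_insert] at hi
        rcases hi with h | h
        · exact absurd h hia
        · exact ((hMfin.mem_toFinset.mp h).1.1.1))]
      rintro ⟨i, hi, hpi⟩
      rw [hs, Finset.mem_insert] at hi
      rcases hi with h | h
      · exact absurd (lt_of_lt_of_le hqp (h ▸ hpi)) (lt_irrefl _)
      · exact absurd (lt_of_lt_of_le (hMlt i (hMfin.mem_toFinset.mp h)) hpi) (lt_irrefl _)
    obtain ⟨y, hyp, hyn⟩ := Set.not_subset.mp hnotsub
    refine ⟨y, hyp, ?_, ?_⟩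
    · intro h
      exact hyn (Set.mem_biUnion (by simp [hs]) h)
    · intro t ht h
      refine hyn (Set.mem_biUnion ?_ h)
      simp only [hs, Finset.coe_insert, Set.mem_insert_iff, Finset.mem_coe,
        hMfin.mem_toFinset]
      exact Or.inr ht
  obtain ⟨y, hyp, hyq, hyM⟩ := havoid
  -- a prime minimal over q + (y) below p
  obtain ⟨Q', hQ'min, hQ'le⟩ :=
    Ideal.exists_minimalPrimes_le (show q ⊔ Ideal.span {y} ≤ p.asIdeal from
      sup_le hqp.le ((Ideal.span_singleton_le_iff_mem _).mpr hyp))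
  have hQ'prime : Q'.IsPrime := hQ'min.1.1
  have hIQ' : q ⊔ Ideal.span {y} ≤ Q' := hQ'min.1.2
  have hqQ'le : q ≤ Q' := le_sup_left.trans hIQ'
  have hyQ' : y ∈ Q' := hIQ' (Submodule.mem_sup_right (Ideal.mem_span_singleton_self y))
  have hqQ' : q < Q' := lt_of_le_of_ne hqQ'le fun h => hyq (h ▸ hyQ')
  have hmin : ∀ t : Ideal R, t.IsPrime → q ⊔ Ideal.span {y} ≤ t → t ≤ Q' → t = Q' :=
    fun t ht hle hleQ => le_antisymm hleQ (hQ'min.2 ⟨ht, hle⟩ hleQ)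
  -- two cases
  rcases eq_or_lt_of_le hQ'le with hcase | hcase
  · -- Q' = p: no prime strictly between q and p, contradicting r
    exact pit_between hqprime (hcase ▸ hQ'prime) hyQ' hqQ'le hmin r.2 h1 (hcase ▸ h2 : r.asIdeal < Q')
  · -- Q' < p: then Q' ∈ M, contradicting y ∈ Q'
    have hgQ' : g ∈ Q' := hall Q' hQ'prime hqQ' hQ'le
    have hQ'M : Q' ∈ M := by
      refine ⟨⟨⟨hQ'prime, sup_le hqQ'le ((Ideal.span_singleton_le_iff_mem _).mpr hgQ')⟩, ?_⟩, hQ'le⟩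
      rintro b ⟨hbprime, hble⟩ hbQ'
      have hqb : q < b := lt_of_le_of_ne (le_sup_left.trans hble)
        fun h => hgq (h ▸ hble (Submodule.mem_sup_right (Ideal.mem_span_singleton_self g)))
      rcases eq_or_lt_of_le hbQ' with hb | hb
      · exact hb.ge
      · exact absurd (pit_between hqprime hQ'prime hyQ' hqQ'le hmin hbprime hqb hb) not_false
    exact hyM Q' hQ'M hyQ'


/-- Let `R` be a Noetherian commutative ring, `U ⊆ Spec R` a dense open
subset, and `p ∉ U` a prime ideal. Then there exists a prime ideal `q ∈ U` with
`q ⊊ p` such that there is no prime ideal `r` with `q ⊊ r ⊊ p`. -/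
theorem stmt1 (R : Type*) [CommRing R] [IsNoetherianRing R]
    (U : Set (PrimeSpectrum R)) (hUopen : IsOpen U) (hUdense : Dense U)
    (p : PrimeSpectrum R) (hp : p ∉ U) :
    ∃ q ∈ U, q.asIdeal < p.asIdeal ∧
      ∀ r : PrimeSpectrum R, ¬ (q.asIdeal < r.asIdeal ∧ r.asIdeal < p.asIdeal) :=
  stmt1_aux R U hUopen hUdense p hp
end

section
/- Let $R$ be a Noetherian local commutative ring whose Krull dimension is strictly greater than $1$. Then the set of prime ideals of $R$ of height exactly $1$ is infinite. -/
open IsLocalRing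

/-- A finitely generated module over a local ring killed by the maximal ideal is Artinian. -/
lemma stmt3_art_aux {A : Type*} [CommRing A] [IsLocalRing A]
    (M : Type*) [AddCommGroup M] [Module A M] [Module.Finite A M]
    (hann : ∀ a ∈ maximalIdeal A, ∀ x : M, a • x = 0) :
    IsArtinian A M := by
  have htor : Module.IsTorsionBySet A M (maximalIdeal A : Set A) := fun x a => hann a.1 a.2 x
  letI := htor.module
  haveI : IsScalarTower A (A ⧸ maximalIdeal A) M := htor.isScalarTower
  letI : Field (A ⧸ maximalIdeal A) := Ideal.Quotient.field _
  haveI : Module.Finite (A ⧸ maximalIdeal A) M :=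
    Module.Finite.of_restrictScalars_finite A _ _
  haveI hA : IsArtinian (A ⧸ maximalIdeal A) M := isArtinian_of_fg_of_artinian'
  -- transfer Artinianness down along the quotient map
  have smul_mem : ∀ (N : Submodule A M) (q : A ⧸ maximalIdeal A) (x : M), x ∈ N → q • x ∈ N := by
    intro N q x hx
    obtain ⟨a, rfl⟩ := Ideal.Quotient.mk_surjective q
    have h1 : (Ideal.Quotient.mk (maximalIdeal A) a) • x = a • x := by
      rw [← Ideal.Quotient.algebraMap_eq, algebraMap_smul]
    rw [h1]
    exact N.smul_mem a hx
  let g : Submodule A M → Submodule (A ⧸ maximalIdeal A) M := fun N =>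
    { carrier := N
      add_mem' := fun h1 h2 => N.add_mem h1 h2
      zero_mem' := N.zero_mem
      smul_mem' := fun q x hx => smul_mem N q x hx }
  have hg : StrictMono g := by
    intro N N' h
    refine lt_of_le_of_ne (fun y hy => h.le hy) (fun he => h.ne ?_)
    ext y
    exact SetLike.ext_iff.mp he y
  rw [isArtinian_iff]
  exact Subrelation.wf (fun {a b} hab => hg hab) (InvImage.wf g ((isArtinian_iff _ _).mp hA))

/-- A quotient of a Noetherian local ring by an ideal containing a power of the
maximal ideal is Artinian (as a module over the base). -/
lemma stmt3_art {A : Type*} [CommRing A] [IsNoetherianRing A] [IsLocalRing A]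
    (k : ℕ) (I : Ideal A) (hk : maximalIdeal A ^ k ≤ I) :
    IsArtinian A (A ⧸ I) := by
  induction k generalizing I with
  | zero =>
    have : I = ⊤ := top_le_iff.mp (by simpa using hk)
    haveI : Subsingleton (A ⧸ I) := by
      rw [this]
      infer_instance
    infer_instance
  | succ k ih =>
    set m := maximalIdeal A with hm
    set J : Ideal A := I ⊔ m ^ k with hJ
    have hIJ : I ≤ J := le_sup_left
    have hJk : m ^ k ≤ J := le_sup_right
    -- the submodule J/I of A⧸I
    set N : Submodule A A := I
    set T : Submodule A A := J
    set S : Submodule A (A ⧸ N) := Submodule.map N.mkQ T with hS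
    haveI : IsNoetherian A (A ⧸ N) := inferInstance
    have hSfg : S.FG := IsNoetherian.noetherian S
    haveI : Module.Finite A S := (Module.Finite.iff_fg).mpr hSfg
    have hSart : IsArtinian A S := by
      apply stmt3_art_aux
      intro a ha y
      apply Subtype.ext
      show a • (y : A ⧸ N) = 0
      obtain ⟨t, ht, hy⟩ := y.2
      rw [← hy, ← map_smul, Submodule.mkQ_apply, Submodule.Quotient.mk_eq_zero]
      -- a • t ∈ I
      have ht' : t ∈ I ⊔ m ^ k := ht
      have : a • t ∈ I := by
        rw [smul_eq_mul]
        obtain ⟨i, hi, u, hu, rfl⟩ := Submodule.mem_sup.mp ht'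
        rw [mul_add]
        refine I.add_mem (I.mul_mem_left a hi) (hk ?_)
        rw [pow_succ']
        exact Ideal.mul_mem_mul ha hu
      exact this
    have hq : IsArtinian A ((A ⧸ N) ⧸ S) := by
      have e := Submodule.quotientQuotientEquivQuotient N T hIJ
      haveI := ih J hJk
      exact isArtinian_of_linearEquiv e.symm
    exact (isArtinian_iff_submodule_quotient S).mpr ⟨hSart, hq⟩

/-- Core of the principal ideal theorem: in a Noetherian local ring whose maximal ideal
contains a power of a principal ideal generated by an element of the maximal ideal,
every prime strictly below the maximal ideal is minimal. -/
lemma stmt3_core {A : Type*} [CommRing A] [IsNoetherianRing A] [IsLocalRing A]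
    (x : A) (hx : x ∈ maximalIdeal A) (k : ℕ) (hk : maximalIdeal A ^ k ≤ Ideal.span {x})
    (P P' : Ideal A) (hP : P.IsPrime) (hP' : P'.IsPrime)
    (hPm : P < maximalIdeal A) (hP'P : P' ≤ P) : P' = P := by
  haveI := hP
  haveI := hP'
  have hxP : x ∉ P := by
    intro hxp
    have : maximalIdeal A ≤ P :=
      Ideal.IsPrime.le_of_pow_le (hk.trans ((Ideal.span_singleton_le_iff_mem P).mpr hxp))
    exact absurd this (not_le_of_gt hPm)
  set B := Localization.AtPrime P with hB
  haveI : IsNoetherianRing B := IsLocalization.isNoetherianRing P.primeCompl B inferInstance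
  have hmB : Ideal.map (algebraMap A B) P = maximalIdeal B :=
    Localization.AtPrime.map_eq_maximalIdeal
  have xu : IsUnit (algebraMap A B x) := IsLocalization.map_units (M := P.primeCompl) B ⟨x, hxP⟩
  set S : ℕ → Ideal A := fun n => Ideal.comap (algebraMap A B) (maximalIdeal B ^ n) with hSdef
  have hSanti : ∀ n, S (n + 1) ≤ S n :=
    fun n => Ideal.comap_mono (Ideal.pow_le_pow_right (Nat.le_succ n))
  haveI hart : IsArtinian A (A ⧸ Ideal.span {x}) := stmt3_art k (Ideal.span {x}) hk
  -- stabilize the chain S n ⊔ (x)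
  set f : ℕ →o (Submodule A (A ⧸ Ideal.span {x}))ᵒᵈ :=
    ⟨fun n => Submodule.map (Ideal.span {x} : Ideal A).mkQ (S n : Submodule A A),
     fun a b hab => by
      simp only
      apply Submodule.map_mono
      exact Ideal.comap_mono (Ideal.pow_le_pow_right hab)⟩ with hf
  obtain ⟨n, hn⟩ := IsArtinian.monotone_stabilizes f
  have hstab : (Ideal.span {x} : Submodule A A) ⊔ S n = Ideal.span {x} ⊔ S (n + 1) := by
    have h1 := congrArg (Submodule.comap (Ideal.span {x} : Ideal A).mkQ)
      (hn (n + 1) (Nat.le_succ n))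
    simpa only [hf, OrderHom.coe_mk, Submodule.comap_map_mkQ] using
      (show Submodule.comap (Ideal.span {x} : Ideal A).mkQ
          (Submodule.map (Ideal.span {x} : Ideal A).mkQ (S n : Submodule A A))
        = Submodule.comap (Ideal.span {x} : Ideal A).mkQ
          (Submodule.map (Ideal.span {x} : Ideal A).mkQ (S (n + 1) : Submodule A A)) from h1)
  -- S n ≤ S (n+1) ⊔ m • S n
  have key : S n ≤ (S (n + 1) : Submodule A A) ⊔ (maximalIdeal A) • (S n : Submodule A A) := by
    intro s hs
    have hs' : s ∈ (Ideal.span {x} : Submodule A A) ⊔ S (n + 1) := by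
      rw [← hstab]
      exact Submodule.mem_sup_right hs
    obtain ⟨y, hy, t, ht, rfl⟩ := Submodule.mem_sup.mp hs'
    obtain ⟨c, rfl⟩ := Ideal.mem_span_singleton'.mp hy
    have hcx : c * x ∈ S n := by
      have : (c * x + t) - t ∈ S n := (S n).sub_mem hs (hSanti n ht)
      simpa using this
    have hc : c ∈ S n := by
      have h2 : algebraMap A B (c * x) ∈ maximalIdeal B ^ n := hcx
      have h3 : algebraMap A B c
          = algebraMap A B (c * x) * ((xu.unit⁻¹ : Bˣ) : B) := by
        rw [map_mul]
        rw [mul_assoc]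
        rw [IsUnit.mul_val_inv xu]
        rw [mul_one]
      show algebraMap A B c ∈ maximalIdeal B ^ n
      rw [h3]
      exact Ideal.mul_mem_right _ _ h2
    refine Submodule.add_mem _ ?_ (Submodule.mem_sup_left ht)
    apply Submodule.mem_sup_right
    have : x • c ∈ (maximalIdeal A) • (S n : Submodule A A) :=
      Submodule.smul_mem_smul hx hc
    simpa [smul_eq_mul, mul_comm] using this
  have hfg : (S n : Submodule A A).FG := IsNoetherian.noetherian _
  have hSeq : S n = S (n + 1) := by
    refine le_antisymm ?_ (hSanti n)
    exact Submodule.le_of_le_smul_of_le_jacobson_bot hfg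
      (IsLocalRing.maximalIdeal_le_jacobson ⊥) key
  -- push to B : maximalIdeal B ^ n = maximalIdeal B ^ (n+1)
  have hmap : ∀ m, Ideal.map (algebraMap A B) (S m) = maximalIdeal B ^ m :=
    fun m => IsLocalization.map_comap P.primeCompl B _
  have hpow : maximalIdeal B ^ n = maximalIdeal B ^ (n + 1) := by
    rw [← hmap n, ← hmap (n + 1), hSeq]
  have hbot : maximalIdeal B ^ n = ⊥ := by
    refine Submodule.eq_bot_of_le_smul_of_le_jacobson_bot (maximalIdeal B)
      (maximalIdeal B ^ n) (IsNoetherian.noetherian _) ?_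
      (IsLocalRing.maximalIdeal_le_jacobson ⊥)
    rw [Ideal.smul_eq_mul]
    exact le_of_eq (by rw [← pow_succ', ← hpow])
  -- the maximal ideal of B is contained in every prime of B
  have hdisj : Disjoint (P.primeCompl : Set A) (P' : Set A) :=
    Set.disjoint_left.mpr fun a ha ha' => ha (hP'P ha')
  have hP'B : (Ideal.map (algebraMap A B) P').IsPrime :=
    IsLocalization.isPrime_of_isPrime_disjoint P.primeCompl B P' hP' hdisj
  have hnil : maximalIdeal B ≤ Ideal.map (algebraMap A B) P' := by
    refine le_trans ?_ (nilradical_le_prime _)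
    intro y hy
    exact ⟨n, by
      have : y ^ n ∈ maximalIdeal B ^ n := Ideal.pow_mem_pow hy n
      rw [hbot] at this
      simpa using this⟩
  have hPP' : P ≤ P' := by
    have h1 : P = Ideal.comap (algebraMap A B) (maximalIdeal B) :=
      (IsLocalization.AtPrime.comap_maximalIdeal B P).symm
    have h2 : Ideal.comap (algebraMap A B) (Ideal.map (algebraMap A B) P') = P' :=
      IsLocalization.comap_map_of_isPrime_disjoint P.primeCompl B hP' hdisj
    rw [h1, ← h2]
    exact Ideal.comap_mono hnil
  exact le_antisymm hP'P hPP'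

/-- **Krull's principal ideal theorem** (in the form we need): if `q` is minimal over a
principal ideal `(x)` in a Noetherian commutative ring, then any prime strictly contained
in `q` is a minimal prime. -/
lemma stmt3_pit {R : Type*} [CommRing R] [IsNoetherianRing R] (x : R) (q : Ideal R)
    (hq : q ∈ (Ideal.span {x}).minimalPrimes) (p p' : Ideal R)
    (hp : p.IsPrime) (hp' : p'.IsPrime) (hpq : p < q) (hp'p : p' ≤ p) : p' = p := by
  haveI hqp : q.IsPrime := hq.1.1
  set A := Localization.AtPrime q with hA
  haveI : IsNoetherianRing A := IsLocalization.isNoetherianRing q.primeCompl A inferInstance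
  have hxq : x ∈ q := hq.1.2 (Ideal.subset_span rfl)
  have hxA : algebraMap R A x ∈ maximalIdeal A := by
    rw [← Localization.AtPrime.map_eq_maximalIdeal]
    exact Ideal.mem_map_of_mem _ hxq
  have hmq : Ideal.map (algebraMap R A) q = maximalIdeal A :=
    Localization.AtPrime.map_eq_maximalIdeal
  -- the maximal ideal of A is the radical of (x)
  have hrad : maximalIdeal A ≤ (Ideal.span {algebraMap R A x}).radical := by
    rw [Ideal.radical_eq_sInf]
    refine le_sInf ?_
    rintro J ⟨hJle, hJprime⟩
    haveI := hJprime
    set r := Ideal.comap (algebraMap R A) J with hr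
    have hrprime : r.IsPrime := hJprime.comap _
    have hdisj : Disjoint (q.primeCompl : Set R) (r : Set R) :=
      ((IsLocalization.orderIsoOfPrime q.primeCompl A ⟨J, hJprime⟩).2).2
    have hrq : r ≤ q := by
      intro a ha
      by_contra hna
      exact Set.disjoint_left.mp hdisj hna ha
    have hxr : x ∈ r := by
      show algebraMap R A x ∈ J
      exact hJle (Ideal.subset_span rfl)
    have hqr : q ≤ r := hq.2 ⟨hrprime, (Ideal.span_singleton_le_iff_mem r).mpr hxr⟩ hrq
    have : r = q := le_antisymm hrq hqr
    have hJeq : maximalIdeal A = J := by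
      have h2 : Ideal.map (algebraMap R A) r = J := IsLocalization.map_comap q.primeCompl A J
      rw [← hmq, ← h2, this]
    exact le_of_eq hJeq
  obtain ⟨k, hk⟩ := Ideal.exists_radical_pow_le_of_fg (Ideal.span {algebraMap R A x})
    (IsNoetherian.noetherian _)
  have hkA : maximalIdeal A ^ k ≤ Ideal.span {algebraMap R A x} :=
    le_trans (Ideal.pow_right_mono hrad k) hk
  -- push the primes p' ≤ p < q to A
  have hpq' : p ≤ q := le_of_lt hpq
  have hdisjp : Disjoint (q.primeCompl : Set R) (p : Set R) :=
    Set.disjoint_left.mpr fun a ha ha' => ha (hpq' ha')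
  have hdisjp' : Disjoint (q.primeCompl : Set R) (p' : Set R) :=
    Set.disjoint_left.mpr fun a ha ha' => ha (hpq' (hp'p ha'))
  have hPprime : (Ideal.map (algebraMap R A) p).IsPrime :=
    IsLocalization.isPrime_of_isPrime_disjoint q.primeCompl A p hp hdisjp
  have hP'prime : (Ideal.map (algebraMap R A) p').IsPrime :=
    IsLocalization.isPrime_of_isPrime_disjoint q.primeCompl A p' hp' hdisjp'
  have hcomp : Ideal.comap (algebraMap R A) (Ideal.map (algebraMap R A) p) = p :=
    IsLocalization.comap_map_of_isPrime_disjoint q.primeCompl A hp hdisjp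
  have hcomp' : Ideal.comap (algebraMap R A) (Ideal.map (algebraMap R A) p') = p' :=
    IsLocalization.comap_map_of_isPrime_disjoint q.primeCompl A hp' hdisjp'
  have hPlt : Ideal.map (algebraMap R A) p < maximalIdeal A := by
    rw [← hmq]
    refine lt_of_le_of_ne (Ideal.map_mono hpq') ?_
    intro he
    have := congrArg (Ideal.comap (algebraMap R A)) he
    rw [hcomp, (show Ideal.comap (algebraMap R A) (Ideal.map (algebraMap R A) q) = q from
      IsLocalization.comap_map_of_isPrime_disjoint q.primeCompl A hqp
      (Set.disjoint_left.mpr fun a ha ha' => ha ha'))] at this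
    exact hpq.ne this
  have heq : Ideal.map (algebraMap R A) p' = Ideal.map (algebraMap R A) p :=
    stmt3_core (algebraMap R A x) hxA k hkA _ _ hPprime hP'prime hPlt
      (Ideal.map_mono hp'p)
  have := congrArg (Ideal.comap (algebraMap R A)) heq
  rwa [hcomp, hcomp'] at this

/-- Let `R` be a Noetherian local commutative ring of Krull dimension
strictly greater than `1`. Then the set of prime ideals of `R` of height exactly `1`
is infinite. -/
theorem stmt3 (R : Type*) [CommRing R] [IsNoetherianRing R] [IsLocalRing R]
    (h : 1 < ringKrullDim R) :
    {p : PrimeSpectrum R | Order.height p = 1}.Infinite := by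
  by_contra hninf
  rw [Set.not_infinite] at hninf
  -- a chain of length ≥ 2
  obtain ⟨c, hc⟩ := lt_iSup_iff.mp h
  have hclen : 2 ≤ c.length := by
    by_contra hcl
    push_neg at hcl
    interval_cases hl : c.length <;> simp_all <;> exact absurd hc (by norm_num)
  set mpt : PrimeSpectrum R := ⟨maximalIdeal R, inferInstance⟩ with hmpt
  have hle_mpt : ∀ p : PrimeSpectrum R, p ≤ mpt := by
    intro p
    rw [← PrimeSpectrum.asIdeal_le_asIdeal]
    exact IsLocalRing.le_maximalIdeal p.2.ne_top
  have hheight2 : (2 : ℕ∞) ≤ Order.height mpt := by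
    refine le_trans ?_ (Order.length_le_height (p := c) (hle_mpt c.last))
    exact_mod_cast hclen
  -- the finite set of "bad" primes
  have hmin : {p : PrimeSpectrum R | p.asIdeal ∈ minimalPrimes R}.Finite := by
    have : {p : PrimeSpectrum R | p.asIdeal ∈ minimalPrimes R}
        = PrimeSpectrum.asIdeal ⁻¹' (minimalPrimes R) := rfl
    rw [this]
    exact Set.Finite.preimage (fun a _ b _ hab => PrimeSpectrum.ext hab)
      (minimalPrimes.finite_of_isNoetherianRing R)
  set T : Finset (PrimeSpectrum R) := (hninf.union hmin).toFinset with hT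
  have hmemT : ∀ p : PrimeSpectrum R,
      p ∈ T ↔ Order.height p = 1 ∨ p.asIdeal ∈ minimalPrimes R := by
    intro p
    rw [hT, Set.Finite.mem_toFinset]
    rfl
  -- the maximal ideal is not contained in any member of T
  have hnotle : ¬∃ i ∈ T, maximalIdeal R ≤ i.asIdeal := by
    rintro ⟨i, hiT, hle⟩
    have hieq : i = mpt := by
      refine PrimeSpectrum.ext (le_antisymm (IsLocalRing.le_maximalIdeal i.2.ne_top) hle)
    rcases (hmemT i).mp hiT with h1 | h2
    · rw [hieq] at h1
      rw [h1] at hheight2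
      exact absurd hheight2 (by norm_num)
    · -- mpt is minimal, but there is a strictly smaller prime
      rw [minimalPrimes_eq_minimals] at h2
      have hhead : c.head < c.last := c.strictMono (by
        show (0 : Fin _) < Fin.last _
        rw [Fin.lt_iff_val_lt_val]
        simpa using by omega)
      have hlast_le : c.last.asIdeal ≤ i.asIdeal := by
        rw [hieq]
        exact (PrimeSpectrum.asIdeal_le_asIdeal _ _).mpr (hle_mpt c.last)
      have := h2.2 c.head.2 (le_trans ((PrimeSpectrum.asIdeal_le_asIdeal _ _).mpr
        (le_of_lt hhead)) hlast_le)
      -- i.asIdeal ≤ c.head.asIdeal, but c.head < c.last ≤ i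
      have hcontra : c.last ≤ c.head := by
        rw [← PrimeSpectrum.asIdeal_le_asIdeal]
        exact le_trans hlast_le this
      exact absurd hcontra (not_le_of_gt hhead)
  -- prime avoidance
  have havoid : ¬((maximalIdeal R : Set R) ⊆ ⋃ i ∈ (T : Set (PrimeSpectrum R)), i.asIdeal) := by
    rw [Ideal.subset_union_prime mpt mpt (fun i _ _ _ => i.2)]
    exact hnotle
  obtain ⟨x, hxm, hxU⟩ := Set.not_subset.mp havoid
  have hnotin : ∀ i ∈ T, x ∉ i.asIdeal := by
    intro i hi hxi
    exact hxU (Set.mem_biUnion hi hxi)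
  -- a minimal prime over (x)
  have hspan : Ideal.span {x} ≤ maximalIdeal R := (Ideal.span_singleton_le_iff_mem _).mpr hxm
  obtain ⟨q, hqmin, hqle⟩ := Ideal.exists_minimalPrimes_le hspan
  haveI hqprime : q.IsPrime := hqmin.1.1
  set qpt : PrimeSpectrum R := ⟨q, hqprime⟩ with hqpt
  have hxq : x ∈ q := hqmin.1.2 (Ideal.subset_span rfl)
  have hqT : qpt ∉ T := fun hmem => hnotin qpt hmem hxq
  -- height qpt ≤ 1 by the principal ideal theorem
  have hle1 : Order.height qpt ≤ 1 := by
    refine Order.height_le fun c' hlast => ?_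
    by_contra hlen
    push_neg at hlen
    have h2len : 2 ≤ c'.length := by
      rcases Nat.lt_or_ge c'.length 2 with h' | h'
      · interval_cases hl : c'.length <;> simp_all <;> exact absurd hlen (by norm_num)
      · exact h'
    have i1 : Fin (c'.length + 1) := ⟨c'.length - 1, by omega⟩
    set a := c' ⟨c'.length - 2, by omega⟩ with ha
    set b := c' ⟨c'.length - 1, by omega⟩ with hb
    have hab : a < b := c'.strictMono (by rw [Fin.lt_iff_val_lt_val]; simpa using by omega)
    have hbq : b < qpt := by
      rw [← hlast]
      show b < c'.last
      exact c'.strictMono (by rw [Fin.lt_iff_val_lt_val]; simp [RelSeries.last]; omega)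
    have := stmt3_pit x q hqmin b.asIdeal a.asIdeal b.2 a.2
      ((PrimeSpectrum.asIdeal_lt_asIdeal _ _).mpr hbq)
      ((PrimeSpectrum.asIdeal_le_asIdeal _ _).mpr (le_of_lt hab))
    exact ((PrimeSpectrum.asIdeal_lt_asIdeal _ _).mpr hab).ne this
  -- but qpt is neither of height one nor minimal: contradiction
  rcases lt_or_eq_of_le hle1 with hlt | heq
  · have h0 : Order.height qpt = 0 := ENat.lt_one_iff_eq_zero.mp hlt
    have hm : IsMin qpt := Order.height_eq_zero.mp h0
    have : qpt.asIdeal ∈ minimalPrimes R := by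
      rw [minimalPrimes_eq_minimals]
      refine ⟨hqprime, fun y hy hyle => ?_⟩
      have h3 : (⟨y, hy⟩ : PrimeSpectrum R) ≤ qpt :=
        (PrimeSpectrum.asIdeal_le_asIdeal ⟨y, hy⟩ qpt).mp hyle
      exact (PrimeSpectrum.asIdeal_le_asIdeal qpt ⟨y, hy⟩).mpr (hm h3)
    exact hqT ((hmemT qpt).mpr (Or.inr this))
  · exact hqT ((hmemT qpt).mpr (Or.inl heq))
end

section
/- Let $f \colon X \to S$ be a morphism of finite type between Noetherian schemes, let $T \subseteq S$ be a locally closed subset, and let $x \in X$ and $t \in T$ be points with $f(x)$ in the closure of $\{t\}$. Then there exist a point $x'$ which is a closed point of $X$ lying in the closure of $\{x\}$, and a point $t' \in T$ lying in the closure of $\{t\}$, such that $f(x')$ lies in the closure of $\{t'\}$ and either $t' = f(x')$ or $t'$ is an immediate generization of $f(x')$. -/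
open AlgebraicGeometry

section ArtinianAux

variable {A : Type*} [CommRing A] {M : Type*} [AddCommGroup M] [Module A M]

theorem artinian_of_torsionBySet (I : Ideal A) (hM : Module.IsTorsionBySet A M I) :
    (letI := hM.module; IsArtinian (A ⧸ I) M) → IsArtinian A M := by
  letI := hM.module
  intro h
  let g : Submodule A M → Submodule (A ⧸ I) M := fun W =>
    { carrier := W
      add_mem' := fun ha hb => W.add_mem ha hb
      zero_mem' := W.zero_mem
      smul_mem' := by
        rintro c m hm
        obtain ⟨a, rfl⟩ := Ideal.Quotient.mk_surjective c
        have : (Ideal.Quotient.mk I a) • m = a • m := hM.mk_smul a m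
        rw [this]
        exact W.smul_mem a hm }
  have hg : ∀ W W' : Submodule A M, g W ≤ g W' ↔ W ≤ W' := by
    intro W W'
    constructor
    · intro h x hx; exact h hx
    · intro h x hx; exact h hx
  exact (OrderEmbedding.ofMapLEIff g hg).wellFoundedLT

theorem artinian_of_noetherian_torsion_maximal (n : Ideal A) [n.IsMaximal] [IsNoetherian A M]
    (h : Module.IsTorsionBySet A M n) : IsArtinian A M := by
  apply artinian_of_torsionBySet n h
  letI := h.module
  haveI : IsScalarTower A (A ⧸ n) M := h.isScalarTower
  haveI : IsNoetherian (A ⧸ n) M := isNoetherian_of_tower A inferInstance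
  letI : Field (A ⧸ n) := Ideal.Quotient.field n
  haveI : Module.Finite (A ⧸ n) M := Module.finite_def.mpr (IsNoetherian.noetherian _)
  infer_instance

theorem artinian_of_pow_torsion (n : Ideal A) [n.IsMaximal] [IsNoetherianRing A] (k : ℕ) :
    ∀ (M : Type*) [AddCommGroup M] [Module A M] [IsNoetherian A M],
      Module.IsTorsionBySet A M ((n ^ k : Ideal A) : Set A) → IsArtinian A M := by
  induction k with
  | zero =>
    intro M _ _ _ h
    haveI : Subsingleton M := by
      constructor
      intro m m'
      have h1 : ∀ x : M, x = 0 := by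
        intro x
        have := h (x := x) (a := ⟨(1 : A), by simp [Ideal.one_eq_top]⟩)
        simpa using this
      rw [h1 m, h1 m']
    infer_instance
  | succ k ih =>
    intro M _ _ _ h
    set N : Submodule A M := (n ^ k : Ideal A) • (⊤ : Submodule A M) with hN
    haveI : IsArtinian A (M ⧸ N) := by
      apply ih
      intro x a
      obtain ⟨m, rfl⟩ := Submodule.Quotient.mk_surjective N x
      have : (a : A) • Submodule.Quotient.mk (p := N) m
          = Submodule.Quotient.mk (p := N) ((a : A) • m) := rfl
      rw [this, Submodule.Quotient.mk_eq_zero]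
      exact Submodule.smul_mem_smul a.2 trivial
    haveI : IsArtinian A N := by
      apply artinian_of_noetherian_torsion_maximal n
      intro x a
      have hx : (x : M) ∈ N := x.2
      apply Subtype.ext
      show (a : A) • (x : M) = 0
      refine Submodule.smul_induction_on hx ?_ ?_
      · intro r hr y _
        rw [smul_smul]
        have har : (a : A) * r ∈ (n ^ (k+1) : Ideal A) := by
          rw [pow_succ']
          exact Ideal.mul_mem_mul a.2 hr
        exact h (a := ⟨_, har⟩)
      · intro y z hy hz
        rw [smul_add, hy, hz, add_zero]
    exact isArtinian_of_range_eq_ker N.subtype N.mkQ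
      ((Submodule.range_subtype _).trans (Submodule.ker_mkQ _).symm)

end ArtinianAux

section PIT

open IsLocalRing

theorem pit_local_s4 {R : Type*} [CommRing R] [IsNoetherianRing R] [IsLocalRing R] {b : R}
    (hb : (maximalIdeal R) ∈ (Ideal.span {b}).minimalPrimes)
    {p q : Ideal R} (hp : p.IsPrime) (hq : q.IsPrime)
    (hqp : q < p) (hpm : p < maximalIdeal R) : False := by
  classical
  set m := maximalIdeal R with hm
  have hbm : b ∈ m := hb.1.2 (Ideal.subset_span rfl)
  have hbp : b ∉ p := by
    intro hmem
    have hsp : Ideal.span {b} ≤ p := (Ideal.span_singleton_le_iff_mem _).mpr hmem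
    exact hpm.not_ge (hb.2 ⟨hp, hsp⟩ hpm.le)
  -- the radical of (b) is m
  have hrad : (Ideal.span {b}).radical = m := by
    rw [Ideal.radical_eq_sInf]
    apply le_antisymm
    · exact sInf_le ⟨hb.1.2, hb.1.1⟩
    · refine le_sInf ?_
      rintro J ⟨hJle, hJpr⟩
      exact hb.2 ⟨hJpr, hJle⟩ (le_maximalIdeal hJpr.ne_top)
  obtain ⟨k, hk⟩ := Ideal.exists_radical_pow_le_of_fg (Ideal.span {b}) (IsNoetherian.noetherian _)
  rw [hrad] at hk
  -- localization at p
  set A := Localization.AtPrime p with hA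
  letI : Algebra R A := inferInstance
  set φ := algebraMap R A with hφ
  haveI : IsNoetherianRing A :=
    IsLocalization.isNoetherianRing p.primeCompl A inferInstance
  -- symbolic powers
  set sn : ℕ → Ideal R := fun i => Ideal.comap φ (Ideal.map φ (p ^ i)) with hsn
  have santi : ∀ i, sn (i + 1) ≤ sn i := by
    intro i
    exact Ideal.comap_mono (Ideal.map_mono (Ideal.pow_le_pow_right (Nat.le_succ i)))
  have hu : IsUnit (φ b) := IsLocalization.map_units A (⟨b, hbp⟩ : p.primeCompl)
  have hprim : ∀ i (c : R), c * b ∈ sn i → c ∈ sn i := by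
    intro i c hcb
    have h1 : φ c * φ b ∈ Ideal.map φ (p ^ i) := by
      rw [← map_mul]; exact hcb
    obtain ⟨u, hu'⟩ := hu
    show φ c ∈ Ideal.map φ (p ^ i)
    have h2 : (φ c * φ b) * (↑u⁻¹ : A) ∈ Ideal.map φ (p ^ i) :=
      Ideal.mul_mem_right _ _ h1
    have h3 : φ c = (φ c * φ b) * (↑u⁻¹ : A) := by
      rw [mul_assoc, ← hu', Units.mul_inv, mul_one]
    rw [h3]; exact h2
  -- the quotient module R/(b) is Artinian
  haveI : IsNoetherianRing R := inferInstance
  haveI hmmax : m.IsMaximal := maximalIdeal.isMaximal R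
  haveI hart : IsArtinian R (R ⧸ Ideal.span {b}) := by
    apply artinian_of_pow_torsion m k
    rintro x ⟨a, ha⟩
    obtain ⟨y, rfl⟩ := Submodule.Quotient.mk_surjective _ x
    show a • Submodule.Quotient.mk y = (0 : R ⧸ Ideal.span {b})
    have : a • Submodule.Quotient.mk (p := Ideal.span {b}) y
        = Submodule.Quotient.mk (p := Ideal.span {b}) (a • y) := rfl
    rw [this, Submodule.Quotient.mk_eq_zero]
    show a • y ∈ Ideal.span {b}
    rw [smul_eq_mul]
    exact Ideal.mul_mem_right _ _ (hk ha)
  -- descending chain stabilizes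
  set Jbar : ℕ → Submodule R (R ⧸ Ideal.span {b}) :=
    fun i => Submodule.map (Ideal.span {b}).mkQ (sn i ⊔ Ideal.span {b}) with hJbar
  obtain ⟨Jmin, ⟨n₀, rfl⟩, hmin⟩ :=
    (IsWellFounded.wf (r := ((· < ·) : Submodule R (R ⧸ Ideal.span {b}) → _ → Prop))).has_min
      (Set.range Jbar) ⟨Jbar 0, 0, rfl⟩
  have hJle : Jbar (n₀ + 1) ≤ Jbar n₀ :=
    Submodule.map_mono (sup_le_sup_right (santi n₀) _)
  have hJeq : Jbar (n₀ + 1) = Jbar n₀ := by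
    rcases hJle.lt_or_eq with hlt | heq
    · exact absurd hlt (hmin _ ⟨n₀ + 1, rfl⟩)
    · exact heq
  -- recover equality of ideals
  have hsup : sn (n₀ + 1) ⊔ Ideal.span {b} = sn n₀ ⊔ Ideal.span {b} := by
    have := congrArg (Submodule.comap (Ideal.span {b}).mkQ) hJeq
    rwa [Submodule.comap_map_eq, Submodule.comap_map_eq, Submodule.ker_mkQ,
      sup_assoc, sup_idem, sup_assoc, sup_idem] at this
  -- Nakayama step 1 : sn n₀ = sn (n₀+1)
  have hstep : sn n₀ ≤ sn (n₀ + 1) := by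
    apply Submodule.le_of_le_smul_of_le_jacobson_bot (IsNoetherian.noetherian (sn n₀))
      (maximalIdeal_le_jacobson ⊥)
    intro x hx
    have hx' : x ∈ sn (n₀ + 1) ⊔ Ideal.span {b} := by
      rw [hsup]; exact Submodule.mem_sup_left hx
    obtain ⟨y, hy, z, hz, rfl⟩ := Submodule.mem_sup.mp hx'
    obtain ⟨c, rfl⟩ := Ideal.mem_span_singleton'.mp hz
    have hcb : c * b ∈ sn n₀ := by
      have : y + c * b - y ∈ sn n₀ := by
        simpa using (Submodule.sub_mem _ hx (santi n₀ hy))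
      simpa using this
    have hc : c ∈ sn n₀ := hprim n₀ c hcb
    refine Submodule.add_mem _ (Submodule.mem_sup_left hy) (Submodule.mem_sup_right ?_)
    rw [mul_comm]
    show b * c ∈ m • sn n₀
    rw [Ideal.smul_eq_mul]
    exact Ideal.mul_mem_mul hbm hc
  have seq : sn (n₀ + 1) = sn n₀ := le_antisymm (santi n₀) hstep
  -- transfer to the localization
  have hmapsn : ∀ i, Ideal.map φ (sn i) = Ideal.map φ p ^ i := by
    intro i
    rw [hsn]
    rw [IsLocalization.map_comap p.primeCompl A]
    exact Ideal.map_pow _ _ _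
  have hPeq : Ideal.map φ p ^ (n₀ + 1) = Ideal.map φ p ^ n₀ := by
    rw [← hmapsn, ← hmapsn, seq]
  -- Nakayama step 2 in A
  have hmA : Ideal.map φ p = maximalIdeal A := Localization.AtPrime.map_eq_maximalIdeal
  have hbot : Ideal.map φ p ^ n₀ = ⊥ := by
    apply Submodule.eq_bot_of_le_smul_of_le_jacobson_bot (Ideal.map φ p)
      _ (IsNoetherian.noetherian _)
    · rw [Ideal.smul_eq_mul, ← pow_succ']
      exact hPeq.ge
    · rw [hmA]
      exact maximalIdeal_le_jacobson ⊥
  -- contradiction via the prime q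
  have hdisj : Disjoint (p.primeCompl : Set R) (q : Set R) :=
    Set.disjoint_left.mpr fun a ha haq => ha (hqp.le haq)
  haveI hQ : (Ideal.map φ q).IsPrime :=
    IsLocalization.isPrime_of_isPrime_disjoint p.primeCompl A q hq hdisj
  have hle : Ideal.map φ p ≤ Ideal.map φ q := by
    intro x hx
    have : x ^ (n₀ + 1) ∈ Ideal.map φ p ^ (n₀ + 1) := Ideal.pow_mem_pow hx _
    rw [hPeq, hbot] at this
    exact hQ.mem_of_pow_mem _ (this ▸ (Ideal.map φ q).zero_mem)
  have hcomap : Ideal.comap φ (Ideal.map φ q) = q :=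
    IsLocalization.comap_map_of_isPrime_disjoint p.primeCompl A hq hdisj
  have : p ≤ q := by
    calc p ≤ Ideal.comap φ (Ideal.map φ p) := Ideal.le_comap_map
      _ ≤ Ideal.comap φ (Ideal.map φ q) := Ideal.comap_mono hle
      _ = q := hcomap
  exact hqp.not_ge this

end PIT

section PIT2

open IsLocalRing

theorem pit {R : Type*} [CommRing R] [IsNoetherianRing R] {b : R} {w : Ideal R}
    (hw : w ∈ (Ideal.span {b}).minimalPrimes)
    {p q : Ideal R} (hp : p.IsPrime) (hq : q.IsPrime) (hqp : q < p) (hpw : p < w) : False := by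
  haveI hwp : w.IsPrime := hw.1.1
  set A := Localization.AtPrime w with hA
  set φ := algebraMap R A with hφ
  haveI : IsNoetherianRing A := IsLocalization.isNoetherianRing w.primeCompl A inferInstance
  have hdp : Disjoint (w.primeCompl : Set R) (p : Set R) :=
    Set.disjoint_left.mpr fun x hx hxp => hx (hpw.le hxp)
  have hdq : Disjoint (w.primeCompl : Set R) (q : Set R) :=
    Set.disjoint_left.mpr fun x hx hxq => hx (hpw.le (hqp.le hxq))
  haveI hP : (Ideal.map φ p).IsPrime :=
    IsLocalization.isPrime_of_isPrime_disjoint w.primeCompl A p hp hdp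
  haveI hQ : (Ideal.map φ q).IsPrime :=
    IsLocalization.isPrime_of_isPrime_disjoint w.primeCompl A q hq hdq
  have hmax : Ideal.map φ w = maximalIdeal A := Localization.AtPrime.map_eq_maximalIdeal
  have hcomax : Ideal.comap φ (maximalIdeal A) = w := Localization.AtPrime.comap_maximalIdeal
  have hw' : maximalIdeal A ∈ (Ideal.span {φ b}).minimalPrimes := by
    constructor
    · refine ⟨inferInstance, ?_⟩
      rw [Ideal.span_singleton_le_iff_mem, ← hmax]
      exact Ideal.mem_map_of_mem φ (hw.1.2 (Ideal.subset_span rfl))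
    · rintro Q ⟨hQpr, hQle⟩ hQm
      have hbQ : b ∈ Ideal.comap φ Q := hQle (Ideal.subset_span rfl)
      have hcQw : Ideal.comap φ Q ≤ w :=
        le_trans (Ideal.comap_mono hQm) (le_of_eq hcomax)
      haveI := hQpr
      have hwle : w ≤ Ideal.comap φ Q :=
        hw.2 ⟨Ideal.IsPrime.comap φ, (Ideal.span_singleton_le_iff_mem _).mpr hbQ⟩ hcQw
      calc maximalIdeal A = Ideal.map φ w := hmax.symm
        _ ≤ Ideal.map φ (Ideal.comap φ Q) := Ideal.map_mono hwle
        _ = Q := IsLocalization.map_comap w.primeCompl A Q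
  have hcomap_p : Ideal.comap φ (Ideal.map φ p) = p :=
    IsLocalization.comap_map_of_isPrime_disjoint w.primeCompl A hp hdp
  have hcomap_q : Ideal.comap φ (Ideal.map φ q) = q :=
    IsLocalization.comap_map_of_isPrime_disjoint w.primeCompl A hq hdq
  have h1 : Ideal.map φ q < Ideal.map φ p := by
    refine (Ideal.map_mono hqp.le).lt_of_ne fun h => ?_
    have := congrArg (Ideal.comap φ) h
    rw [hcomap_q, hcomap_p] at this
    exact hqp.ne this
  have h2 : Ideal.map φ p < maximalIdeal A := by
    refine lt_of_le_of_ne (by rw [← hmax]; exact Ideal.map_mono hpw.le) fun h => ?_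
    have := congrArg (Ideal.comap φ) h
    rw [hcomap_p, hcomax] at this
    exact hpw.ne this
  exact pit_local_s4 hw' hP hQ h1 h2

theorem pit_rel {R : Type*} [CommRing R] [IsNoetherianRing R] {q : Ideal R} (hq : q.IsPrime)
    (b : R) {w : Ideal R} (hw : w ∈ (q ⊔ Ideal.span {b}).minimalPrimes)
    {p : Ideal R} (hp : p.IsPrime) (hqp : q < p) (hpw : p < w) : False := by
  set f := Ideal.Quotient.mk q with hf0
  have hf : Function.Surjective f := Ideal.Quotient.mk_surjective
  have hker : RingHom.ker f = q := Ideal.mk_ker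
  have hcomapspan : Ideal.comap f (Ideal.span {f b}) = q ⊔ Ideal.span {b} := by
    have h1 : Ideal.span {f b} = Ideal.map f (Ideal.span {b}) := by
      rw [Ideal.map_span, Set.image_singleton]
    rw [h1, Ideal.comap_map_of_surjective f hf, ← RingHom.ker_eq_comap_bot, hker, sup_comm]
  have himg : (q ⊔ Ideal.span {b}).minimalPrimes
      = Ideal.comap f '' (Ideal.span {f b}).minimalPrimes := by
    rw [← hcomapspan]
    exact Ideal.comap_minimalPrimes_eq_of_surjective hf _
  rw [himg] at hw
  obtain ⟨W, hW, hWw⟩ := hw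
  have hmapw : Ideal.map f w = W := by
    rw [← hWw, Ideal.map_comap_of_surjective f hf]
  have comap_map : ∀ I : Ideal R, q ≤ I → Ideal.comap f (Ideal.map f I) = I := by
    intro I hI
    rw [Ideal.comap_map_of_surjective f hf, ← RingHom.ker_eq_comap_bot, hker,
      sup_eq_left.mpr hI]
  haveI hP : (Ideal.map f p).IsPrime :=
    Ideal.map_isPrime_of_surjective hf (by rw [hker]; exact hqp.le)
  haveI hQ : (Ideal.map f q).IsPrime :=
    Ideal.map_isPrime_of_surjective hf (by rw [hker])
  have h1 : Ideal.map f q < Ideal.map f p := by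
    refine (Ideal.map_mono hqp.le).lt_of_ne fun h => ?_
    have := congrArg (Ideal.comap f) h
    rw [comap_map q le_rfl, comap_map p hqp.le] at this
    exact hqp.ne this
  have h2 : Ideal.map f p < Ideal.map f w := by
    refine (Ideal.map_mono hpw.le).lt_of_ne fun h => ?_
    have := congrArg (Ideal.comap f) h
    rw [comap_map p hqp.le, comap_map w (hqp.le.trans hpw.le)] at this
    exact hpw.ne this
  rw [hmapw] at h2
  exact pit hW hP hQ h1 h2

theorem minimalPrimes_finite {R : Type*} [CommRing R] [IsNoetherianRing R] (I : Ideal R) :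
    I.minimalPrimes.Finite := by
  rw [Ideal.minimalPrimes_eq_comap]
  exact (minimalPrimes.finite_of_isNoetherianRing (R ⧸ I)).image _

theorem no_intermediate {R : Type*} [CommRing R] [IsNoetherianRing R]
    {q r m : Ideal R} (hq : q.IsPrime) (hr : r.IsPrime) (hm : m.IsPrime)
    (hqr : q < r) (hrm : r < m) {a : R} (ham : a ∈ m) (haq : a ∉ q)
    (H : ∀ w : Ideal R, w.IsPrime → q < w → w ≤ m → a ∈ w) : False := by
  classical
  set J := q ⊔ Ideal.span {a} with hJdef
  have hfin := minimalPrimes_finite J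
  have hJr : J ≤ r :=
    sup_le hqr.le ((Ideal.span_singleton_le_iff_mem _).mpr (H r hr hqr hrm.le))
  obtain ⟨w', hw', hw'r⟩ := Ideal.exists_minimalPrimes_le hJr
  have hnot : ∀ w ∈ J.minimalPrimes, ¬ m ≤ w := by
    intro w hwJ hmw
    have hle : w' ≤ w := hw'r.trans (hrm.le.trans hmw)
    have hwle : w ≤ w' := hwJ.2 ⟨hw'.1.1, hw'.1.2⟩ hle
    exact hrm.not_ge (hmw.trans (hwle.trans hw'r))
  obtain ⟨b, hbm, hb⟩ : ∃ b ∈ m, ∀ w ∈ J.minimalPrimes, b ∉ w := by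
    by_contra hcon
    push_neg at hcon
    set s : Finset (Ideal R) := hfin.toFinset with hs
    have hsub : (m : Set R) ⊆ ⋃ w ∈ s, (id w : Ideal R) := by
      intro x hx
      obtain ⟨w, hw, hxw⟩ := hcon x hx
      exact Set.mem_biUnion (hfin.mem_toFinset.mpr hw) hxw
    have := (Ideal.subset_union_prime (⊥ : Ideal R) (⊥ : Ideal R)
      (fun i hi _ _ => (hfin.mem_toFinset.mp hi).1.1)).mp hsub
    obtain ⟨w, hw, hmw⟩ := this
    exact hnot w (hfin.mem_toFinset.mp hw) hmw
  have hbq : b ∉ q := fun hbq => hb w' hw' ((le_sup_left.trans hw'.1.2) hbq)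
  have hKm : q ⊔ Ideal.span {b} ≤ m :=
    sup_le (hqr.le.trans hrm.le) ((Ideal.span_singleton_le_iff_mem _).mpr hbm)
  obtain ⟨w, hwK, hwm⟩ := Ideal.exists_minimalPrimes_le hKm
  haveI hwpr : w.IsPrime := hwK.1.1
  have hbw : b ∈ w := hwK.1.2 (Ideal.mem_sup_right (Ideal.subset_span rfl))
  have hqw : q < w := (le_sup_left.trans hwK.1.2).lt_of_ne fun h => hbq (h ▸ hbw)
  have haw : a ∈ w := H w hwpr hqw hwm
  have hJw : J ≤ w :=
    sup_le (le_sup_left.trans hwK.1.2) ((Ideal.span_singleton_le_iff_mem _).mpr haw)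
  obtain ⟨w'', hw'', hw''w⟩ := Ideal.exists_minimalPrimes_le hJw
  have haw'' : a ∈ w'' := hw''.1.2 (Ideal.mem_sup_right (Ideal.subset_span rfl))
  have hqw'' : q < w'' := (le_sup_left.trans hw''.1.2).lt_of_ne fun h => haq (h ▸ haw'')
  have hw''lt : w'' < w := hw''w.lt_of_ne fun h => hb w'' hw'' (h ▸ hbw)
  exact pit_rel hq b hwK hw''.1.1 hqw'' hw''lt

theorem keyRel {R : Type*} [CommRing R] [IsNoetherianRing R]
    {P S : Ideal R} (hP : P.IsPrime) (hS : S.IsPrime) (hPS : P ≤ S)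
    {a : R} (haS : a ∈ S) (haP : a ∉ P) :
    ∃ Q : Ideal R, Q.IsPrime ∧ P ≤ Q ∧ Q ≤ S ∧ a ∉ Q ∧
      ∀ z : Ideal R, z.IsPrime → Q ≤ z → z ≤ S → z = Q ∨ z = S := by
  classical
  set 𝒮 : Set (Ideal R) := {q | (q.IsPrime ∧ P ≤ q) ∧ q ≤ S ∧ a ∉ q} with h𝒮
  obtain ⟨Q, hQmem, hQmax⟩ :=
    (set_has_maximal_iff_noetherian.mpr inferInstance) 𝒮 ⟨P, ⟨hP, le_rfl⟩, hPS, haP⟩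
  obtain ⟨⟨hQpr, hPQ⟩, hQS, haQ⟩ := hQmem
  refine ⟨Q, hQpr, hPQ, hQS, haQ, ?_⟩
  intro z hz hQz hzS
  by_contra hcon
  push_neg at hcon
  obtain ⟨hzQ, hzS'⟩ := hcon
  have hQzlt : Q < z := hQz.lt_of_ne (Ne.symm hzQ)
  have hzSlt : z < S := hzS.lt_of_ne hzS'
  have H : ∀ w : Ideal R, w.IsPrime → Q < w → w ≤ S → a ∈ w := by
    intro w hw hQw hwS
    by_contra haw
    exact (hQmax w ⟨⟨hw, hPQ.trans hQw.le⟩, hwS, haw⟩) hQw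
  exact no_intermediate hQpr hz hS hQzlt hzSlt haS haQ H

end PIT2

theorem specKey {R : Type*} [CommRing R] [IsNoetherianRing R]
    {t₀ s₀ : PrimeSpectrum R} (hts : t₀ ≤ s₀)
    {U₀ : Set (PrimeSpectrum R)} (hU : IsOpen U₀) (htU : t₀ ∈ U₀) (hsU : s₀ ∉ U₀) :
    ∃ q : PrimeSpectrum R, t₀ ≤ q ∧ q ≤ s₀ ∧ q ∈ U₀ ∧ q ≠ s₀ ∧
      ∀ z : PrimeSpectrum R, q ≤ z → z ≤ s₀ → z = q ∨ z = s₀ := by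
  obtain ⟨I, hI⟩ := (PrimeSpectrum.isClosed_iff_zeroLocus_ideal U₀ᶜ).mp hU.isClosed_compl
  have ht' : t₀ ∉ PrimeSpectrum.zeroLocus (I : Set R) := by
    rw [← hI]; simpa using htU
  have hs' : s₀ ∈ PrimeSpectrum.zeroLocus (I : Set R) := by
    rw [← hI]; simpa using hsU
  rw [PrimeSpectrum.mem_zeroLocus] at ht' hs'
  obtain ⟨a, haI, hat⟩ := Set.not_subset.mp ht'
  have haS : a ∈ s₀.asIdeal := hs' haI
  obtain ⟨Q, hQpr, hPQ, hQS, haQ, hfin⟩ := keyRel t₀.2 s₀.2 hts haS hat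
  refine ⟨⟨Q, hQpr⟩, hPQ, hQS, ?_, ?_, ?_⟩
  · by_contra hmem
    have : (⟨Q, hQpr⟩ : PrimeSpectrum R) ∈ U₀ᶜ := hmem
    rw [hI, PrimeSpectrum.mem_zeroLocus] at this
    exact haQ (this haI)
  · intro h
    exact haQ (by rw [show Q = s₀.asIdeal from congrArg PrimeSpectrum.asIdeal h]; exact haS)
  · intro z h1 h2
    rcases hfin z.asIdeal z.2 h1 h2 with h | h
    · exact Or.inl (PrimeSpectrum.ext h)
    · exact Or.inr (PrimeSpectrum.ext h)

theorem exists_closed_specialization {α : Type*} [TopologicalSpace α]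
    [TopologicalSpace.NoetherianSpace α] [T0Space α] (x : α) :
    ∃ y : α, y ∈ closure ({x} : Set α) ∧ IsClosed ({y} : Set α) := by
  set 𝒞 : Set (TopologicalSpace.Closeds α) :=
    {C | (C : Set α).Nonempty ∧ (C : Set α) ⊆ closure {x}} with h𝒞
  have hne : 𝒞.Nonempty :=
    ⟨⟨closure {x}, isClosed_closure⟩, ⟨x, subset_closure rfl⟩, by simp⟩
  obtain ⟨C, ⟨⟨y, hyC⟩, hCsub⟩, hmin⟩ :=
    (wellFounded_lt (α := TopologicalSpace.Closeds α)).has_min 𝒞 hne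
  have hclo : ∀ z ∈ (C : Set α), closure ({z} : Set α) = (C : Set α) := by
    intro z hz
    have h1 : closure ({z} : Set α) ⊆ (C : Set α) :=
      closure_minimal (Set.singleton_subset_iff.mpr hz) C.isClosed
    set D : TopologicalSpace.Closeds α := ⟨closure {z}, isClosed_closure⟩ with hD
    have hD𝒞 : D ∈ 𝒞 := ⟨⟨z, subset_closure rfl⟩, fun w hw => hCsub (h1 hw)⟩
    have hle : D ≤ C := h1
    have hnlt : ¬ D < C := hmin D hD𝒞
    have : D = C := hle.lt_or_eq.resolve_left hnlt
    exact congrArg (fun E : TopologicalSpace.Closeds α => (E : Set α)) this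
  have hy : ∀ z ∈ (C : Set α), z = y := by
    intro z hz
    exact (inseparable_iff_closure_eq.mpr ((hclo z hz).trans (hclo y hyC).symm)).eq
  refine ⟨y, hCsub hyC, ?_⟩
  have hsing : ({y} : Set α) = (C : Set α) :=
    Set.eq_of_subset_of_subset (Set.singleton_subset_iff.mpr hyC)
      (fun z hz => hy z hz)
  rw [hsing]
  exact C.isClosed

/-- Let `f : X → S` be a morphism of finite type between Noetherian
schemes, `T ⊆ S` a locally closed subset, and `x ∈ X`, `t ∈ T` points with
`f(x) ∈ closure {t}`. Then there exist a closed point `x'` of `X` lying in the closure of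
`{x}` and a point `t' ∈ T` lying in the closure of `{t}` such that `f(x') ∈ closure {t'}`
and either `t' = f(x')` or `t'` is an immediate generization of `f(x')`. -/
theorem stmt4 (X S : Scheme) [IsNoetherian X] [IsNoetherian S] (f : X ⟶ S)
    [LocallyOfFiniteType f] [QuasiCompact f]
    (T : Set S) (hT : IsLocallyClosed T)
    (x : X) (t : S) (htT : t ∈ T) (hxt : f.base x ∈ closure ({t} : Set S)) :
    ∃ (x' : X) (t' : S), IsClosed ({x'} : Set X) ∧ x' ∈ closure ({x} : Set X) ∧
      t' ∈ T ∧ t' ∈ closure ({t} : Set S) ∧ f.base x' ∈ closure ({t'} : Set S) ∧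
      (t' = f.base x' ∨
        (t' ≠ f.base x' ∧
          ∀ z : S, z ∈ closure ({t'} : Set S) → f.base x' ∈ closure ({z} : Set S) →
            z = t' ∨ z = f.base x')) := by
  obtain ⟨x', hx'mem, hx'cl⟩ := exists_closed_specialization (α := X) x
  set s := f.base x' with hs
  have hxx' : x ⤳ x' := specializes_iff_mem_closure.mpr hx'mem
  have htfx : t ⤳ f.base x := specializes_iff_mem_closure.mpr hxt
  have hts : t ⤳ s := htfx.trans (hxx'.map f.base.hom.continuous)
  obtain ⟨U, C, hUo, hCc, rfl⟩ := hT
  have hTC : closure ({t} : Set S) ⊆ C :=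
    closure_minimal (Set.singleton_subset_iff.mpr htT.2) hCc
  by_cases hsU : s ∈ U
  · exact ⟨x', s, hx'cl, hx'mem, ⟨hsU, hTC (specializes_iff_mem_closure.mp hts)⟩,
      specializes_iff_mem_closure.mp hts, subset_closure rfl, Or.inl rfl⟩
  · -- affine open neighborhood of s
    obtain ⟨V, hVaff, hsV, -⟩ :=
      TopologicalSpace.Opens.isBasis_iff_nbhd.mp (S.isBasis_affineOpens)
        (U := ⊤) (x := s) trivial
    have htV : t ∈ V := hts.mem_open V.2 hsV
    haveI hVa : IsAffineOpen V := hVaff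
    haveI : IsNoetherianRing Γ(S, V) := IsLocallyNoetherian.component_noetherian ⟨V, hVaff⟩
    set e := Scheme.homeoOfIso hVa.isoSpec with he
    have hιoe : Topology.IsOpenEmbedding (Scheme.Opens.ι V).base :=
      (inferInstance : IsOpenImmersion (Scheme.Opens.ι V)).base_open
    have hrange : Set.range (Scheme.Opens.ι V).base = (V : Set S) := Scheme.Opens.range_ι V
    obtain ⟨tV, htV'⟩ : ∃ z, (Scheme.Opens.ι V).base z = t := by
      have : t ∈ Set.range (Scheme.Opens.ι V).base := by rw [hrange]; exact htV
      exact this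
    obtain ⟨sV, hsV'⟩ : ∃ z, (Scheme.Opens.ι V).base z = s := by
      have : s ∈ Set.range (Scheme.Opens.ι V).base := by rw [hrange]; exact hsV
      exact this
    have hspecι : ∀ a b : ↥(V : Scheme), (Scheme.Opens.ι V).base a ⤳ (Scheme.Opens.ι V).base b ↔ a ⤳ b := fun a b =>
      hιoe.toIsEmbedding.toIsInducing.specializes_iff
    have hspece : ∀ a b : ↥(V : Scheme), e a ⤳ e b ↔ a ⤳ b := fun a b =>
      e.isInducing.specializes_iff
    set t₀ : PrimeSpectrum Γ(S, V) := e tV with ht₀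
    set s₀ : PrimeSpectrum Γ(S, V) := e sV with hs₀
    have hts₀ : t₀ ≤ s₀ := by
      rw [PrimeSpectrum.le_iff_specializes]
      refine (hspece tV sV).mpr ?_
      rw [← hspecι, htV', hsV']
      exact hts
    set U₀ : Set (PrimeSpectrum Γ(S, V)) := e.symm ⁻¹' ((Scheme.Opens.ι V).base ⁻¹' U) with hU₀
    have hU₀o : IsOpen U₀ :=
      ((hUo.preimage (Scheme.Opens.ι V).base.hom.continuous).preimage e.symm.continuous)
    have htU₀ : t₀ ∈ U₀ := by
      show e.symm (e tV) ∈ (Scheme.Opens.ι V).base ⁻¹' U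
      rw [e.symm_apply_apply]
      show (Scheme.Opens.ι V).base tV ∈ U
      rw [htV']; exact htT.1
    have hsU₀ : s₀ ∉ U₀ := by
      intro h
      apply hsU
      have h2 : e.symm (e sV) ∈ (Scheme.Opens.ι V).base ⁻¹' U := h
      rw [e.symm_apply_apply] at h2
      have h3 : (Scheme.Opens.ι V).base sV ∈ U := h2
      rwa [hsV'] at h3
    obtain ⟨q₀, htq₀, hq₀s, hq₀U, hq₀ne, hq₀fin⟩ := specKey hts₀ hU₀o htU₀ hsU₀
    set t' := (Scheme.Opens.ι V).base (e.symm q₀) with ht'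
    have htt' : t ⤳ t' := by
      rw [← htV', hspecι, ← hspece, e.apply_symm_apply q₀]
      exact (PrimeSpectrum.le_iff_specializes _ _).mp htq₀
    have ht's : t' ⤳ s := by
      rw [← hsV', hspecι, ← hspece, e.apply_symm_apply q₀]
      exact (PrimeSpectrum.le_iff_specializes _ _).mp hq₀s
    have ht'U : t' ∈ U := hq₀U
    have ht'ne : t' ≠ s := by
      intro h
      apply hq₀ne
      have h1 : e.symm q₀ = sV := hιoe.injective (h.trans hsV'.symm)
      have := congrArg e h1
      rwa [e.apply_symm_apply q₀] at this
    refine ⟨x', t', hx'cl, hx'mem,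
      ⟨ht'U, hTC (specializes_iff_mem_closure.mp htt')⟩,
      specializes_iff_mem_closure.mp htt',
      specializes_iff_mem_closure.mp ht's,
      Or.inr ⟨ht'ne, ?_⟩⟩
    intro z hz1 hz2
    have ht'z : t' ⤳ z := specializes_iff_mem_closure.mpr hz1
    have hzs : z ⤳ s := specializes_iff_mem_closure.mpr hz2
    have hzV : z ∈ V := hzs.mem_open V.2 hsV
    obtain ⟨zV, hzV'⟩ : ∃ w, (Scheme.Opens.ι V).base w = z := by
      have : z ∈ Set.range (Scheme.Opens.ι V).base := by rw [hrange]; exact hzV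
      exact this
    set z₀ : PrimeSpectrum Γ(S, V) := e zV with hz₀
    have h1 : q₀ ≤ z₀ := by
      rw [PrimeSpectrum.le_iff_specializes]
      have := ht'z
      rw [← hzV', ht', hspecι, ← hspece, e.apply_symm_apply q₀] at this
      exact this
    have h2 : z₀ ≤ s₀ := by
      rw [PrimeSpectrum.le_iff_specializes]; refine (hspece zV sV).mpr ?_; rw [← hspecι, hzV', hsV']
      exact hzs
    rcases hq₀fin z₀ h1 h2 with h | h
    · left
      rw [← hzV', ht']
      congr 1
      rw [← h, e.symm_apply_apply]
    · right
      have hzVsV : zV = sV := by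
        have := congrArg e.symm h
        rwa [e.symm_apply_apply, e.symm_apply_apply] at this
      rw [← hzV', hzVsV, hsV']
end

section
/- Let $\Lambda$ be a commutative ring with $m\Lambda = 0$ for some integer $m > 0$, let $A$ be a set of prime numbers containing all prime divisors of $m$, and let $G$ be a profinite group with a closed normal subgroup $N$ which is isomorphic as a topological group to $\mathbb{Z}_A = \prod_{\ell \in A} \mathbb{Z}_\ell$. Let $\sigma$ be a topological generator of $N$, let $R = \Lambda[[G]]$ be the completed group ring, and set $t = [\sigma] - 1 \in R$. Then: (i) $t$ is a non-zero-divisor in $R$ (both $tr = 0$ and $rt = 0$ imply $r = 0$); (ii) $tR = Rt$; and (iii) for any other topological generator $\sigma'$ of $N$, one has $([\sigma'] - 1)R = tR$. -/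
open scoped Pointwise

section CompletedGroupRing

variable (Λ : Type*) [CommRing Λ] (G : Type*) [Group G] [TopologicalSpace G]

/-- The transition ring homomorphism `Λ[G/H] → Λ[G/K]` for open normal subgroups
`H ≤ K` of `G`, induced by the quotient map `G/H → G/K`. -/
noncomputable def cgrTrans {H K : OpenNormalSubgroup G} (h : H.toSubgroup ≤ K.toSubgroup) :
    MonoidAlgebra Λ (G ⧸ H.toSubgroup) →+* MonoidAlgebra Λ (G ⧸ K.toSubgroup) :=
  MonoidAlgebra.mapDomainRingHom Λ
    (QuotientGroup.map H.toSubgroup K.toSubgroup (MonoidHom.id G)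
      (by rwa [Subgroup.comap_id]))

/-- The completed group ring `Λ[[G]] = lim_H Λ[G/H]`, realized as the subring of
compatible families in `∏_H Λ[G/H]`, where `H` runs over the open normal subgroups
of `G`. -/
noncomputable def completedGroupRing :
    Subring (∀ H : OpenNormalSubgroup G, MonoidAlgebra Λ (G ⧸ H.toSubgroup)) where
  carrier := {x | ∀ (H K : OpenNormalSubgroup G) (h : H.toSubgroup ≤ K.toSubgroup),
    cgrTrans Λ G h (x H) = x K}
  zero_mem' := by intro H K h; simp
  one_mem' := by intro H K h; simp
  add_mem' := by intro a b ha hb H K h; simp only [Pi.add_apply, map_add, ha H K h, hb H K h]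
  mul_mem' := by intro a b ha hb H K h; simp only [Pi.mul_apply, map_mul, ha H K h, hb H K h]
  neg_mem' := by intro a ha H K h; simp only [Pi.neg_apply, map_neg, ha H K h]

/-- The canonical (multiplicative) map `G → Λ[[G]]`, `g ↦ [g]`. -/
noncomputable def cgrOf (g : G) : completedGroupRing Λ G :=
  ⟨fun H => MonoidAlgebra.of Λ (G ⧸ H.toSubgroup) (QuotientGroup.mk g), by
    intro H K h
    simp [cgrTrans, MonoidAlgebra.of_apply, Finsupp.mapDomain_single]⟩

end CompletedGroupRing

section ZA

/-- `ℤ_A = ∏_{ℓ ∈ A} ℤ_ℓ`, for a set `A` of prime numbers. -/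
def ZA (A : Set ℕ) (hA : ∀ ℓ ∈ A, Nat.Prime ℓ) : Type :=
  ∀ ℓ : A, @PadicInt ℓ.1 ⟨hA ℓ.1 ℓ.2⟩

noncomputable instance (A : Set ℕ) (hA : ∀ ℓ ∈ A, Nat.Prime ℓ) : AddCommGroup (ZA A hA) :=
  inferInstanceAs (AddCommGroup (∀ ℓ : A, @PadicInt ℓ.1 ⟨hA ℓ.1 ℓ.2⟩))

noncomputable instance (A : Set ℕ) (hA : ∀ ℓ ∈ A, Nat.Prime ℓ) : TopologicalSpace (ZA A hA) :=
  inferInstanceAs (TopologicalSpace (∀ ℓ : A, @PadicInt ℓ.1 ⟨hA ℓ.1 ℓ.2⟩))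

end ZA

set_option linter.unusedSectionVars false

open Finset

section FiniteLevel

variable {Λ : Type*} [CommRing Λ] {Q : Type*} [Group Q]

/-- The "norm element" `ν = ∑_{i < orderOf s} [sⁱ]` in a group algebra. -/
noncomputable def nuel (Λ : Type*) [CommRing Λ] {Q : Type*} [Group Q] (s : Q) :
    MonoidAlgebra Λ Q :=
  ∑ i ∈ Finset.range (orderOf s), MonoidAlgebra.single (s ^ i) 1

lemma sum_shift {M : Type*} [AddCommGroup M] {n : ℕ} {f : ℕ → M} (hf : f n = f 0) :
    ∑ i ∈ range n, f (i + 1) = ∑ i ∈ range n, f i := by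
  have h1 := Finset.sum_range_succ' f n
  have h2 := Finset.sum_range_succ f n
  rw [hf] at h2
  rw [h1] at h2
  exact add_right_cancel h2

lemma nuel_mul_single_pow (s : Q) (j : ℕ) :
    (nuel Λ s) * MonoidAlgebra.single (s ^ j) 1 = nuel Λ s := by
  induction j with
  | zero => rw [pow_zero, ← MonoidAlgebra.one_def, mul_one]
  | succ j ih =>
      have h : MonoidAlgebra.single (s ^ (j+1)) (1:Λ)
          = MonoidAlgebra.single (s ^ j) 1 * MonoidAlgebra.single s 1 := by
        rw [MonoidAlgebra.single_mul_single, mul_one, pow_succ]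
      rw [h, ← mul_assoc, ih]
      unfold nuel
      rw [Finset.sum_mul]
      simp only [MonoidAlgebra.single_mul_single, mul_one, ← pow_succ]
      exact sum_shift (f := fun i => MonoidAlgebra.single (s ^ i) (1:Λ))
        (by simp only [pow_orderOf_eq_one, pow_zero])

lemma single_pow_mul_nuel (s : Q) (j : ℕ) :
    MonoidAlgebra.single (s ^ j) (1:Λ) * nuel Λ s = nuel Λ s := by
  induction j with
  | zero => rw [pow_zero, ← MonoidAlgebra.one_def, one_mul]
  | succ j ih =>
      have h : MonoidAlgebra.single (s ^ (j+1)) (1:Λ)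
          = MonoidAlgebra.single s 1 * MonoidAlgebra.single (s ^ j) 1 := by
        rw [MonoidAlgebra.single_mul_single, mul_one, pow_succ']
      rw [h, mul_assoc, ih]
      unfold nuel
      rw [Finset.mul_sum]
      simp only [MonoidAlgebra.single_mul_single, mul_one]
      have : ∀ i : ℕ, s * s ^ i = s ^ (i + 1) := fun i => by rw [pow_succ']
      simp only [this]
      exact sum_shift (f := fun i => MonoidAlgebra.single (s ^ i) (1:Λ))
        (by simp only [pow_orderOf_eq_one, pow_zero])

lemma zpow_eq_pow_mod [Finite Q] (s : Q) (i : ℤ) :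
    ∃ k : ℕ, k < orderOf s ∧ s ^ k = s ^ i := by
  have hn : 0 < orderOf s := orderOf_pos s
  refine ⟨(i % (orderOf s : ℤ)).toNat, ?_, ?_⟩
  · have h1 : 0 ≤ i % (orderOf s : ℤ) := Int.emod_nonneg i (by exact_mod_cast hn.ne')
    have h2 : i % (orderOf s : ℤ) < (orderOf s : ℤ) := Int.emod_lt_of_pos i (by exact_mod_cast hn)
    omega
  · have h1 : 0 ≤ i % (orderOf s : ℤ) := Int.emod_nonneg i (by exact_mod_cast hn.ne')
    rw [← zpow_natCast, Int.toNat_of_nonneg h1, zpow_mod_orderOf]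

lemma mem_zpowers_iff_pow [Finite Q] {s c : Q} :
    c ∈ Subgroup.zpowers s ↔ ∃ i, i < orderOf s ∧ s ^ i = c := by
  constructor
  · intro h
    obtain ⟨k, hk⟩ := Subgroup.mem_zpowers_iff.mp h
    obtain ⟨i, hi, hsi⟩ := zpow_eq_pow_mod s k
    exact ⟨i, hi, by rw [hsi, hk]⟩
  · rintro ⟨i, _, rfl⟩
    exact ⟨(i:ℤ), by simp [zpow_natCast]⟩

lemma nuel_mul_single_of_mem [Finite Q] {s c : Q} (hc : c ∈ Subgroup.zpowers s) :
    nuel Λ s * MonoidAlgebra.single c (1:Λ) = nuel Λ s := by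
  obtain ⟨i, _, rfl⟩ := mem_zpowers_iff_pow.mp hc
  exact nuel_mul_single_pow s i

lemma single_mul_nuel_of_mem [Finite Q] {s c : Q} (hc : c ∈ Subgroup.zpowers s) :
    MonoidAlgebra.single c (1:Λ) * nuel Λ s = nuel Λ s := by
  obtain ⟨i, _, rfl⟩ := mem_zpowers_iff_pow.mp hc
  exact single_pow_mul_nuel s i

lemma nuel_eq_of_zpowers_eq [Finite Q] {s t : Q}
    (h : Subgroup.zpowers s = Subgroup.zpowers t) : nuel Λ s = nuel Λ t := by
  classical
  have hbr : ∀ u : Q, nuel Λ u = ∑ c ∈ (range (orderOf u)).image (u ^ ·), MonoidAlgebra.single c (1:Λ) := by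
    intro u
    rw [Finset.sum_image]
    · rfl
    · intro x hx y hy hxy
      exact pow_injOn_Iio_orderOf (by simpa using hx) (by simpa using hy) hxy
  have him : (range (orderOf s)).image (s ^ ·) = (range (orderOf t)).image (t ^ ·) := by
    ext c
    simp only [Finset.mem_image, Finset.mem_range]
    constructor
    · rintro ⟨i, hi, rfl⟩
      have : s ^ i ∈ Subgroup.zpowers t := h ▸ (Subgroup.mem_zpowers_iff.mpr ⟨(i:ℤ), by rw [zpow_natCast]⟩)
      obtain ⟨j, hj, hje⟩ := mem_zpowers_iff_pow.mp this
      exact ⟨j, hj, hje⟩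
    · rintro ⟨i, hi, rfl⟩
      have : t ^ i ∈ Subgroup.zpowers s := h ▸ (Subgroup.mem_zpowers_iff.mpr ⟨(i:ℤ), by rw [zpow_natCast]⟩)
      obtain ⟨j, hj, hje⟩ := mem_zpowers_iff_pow.mp this
      exact ⟨j, hj, hje⟩
  rw [hbr s, hbr t, him]

lemma nuel_central [Finite Q] {s : Q} (hnorm : (Subgroup.zpowers s).Normal)
    (w : MonoidAlgebra Λ Q) : nuel Λ s * w = w * nuel Λ s := by
  induction w using MonoidAlgebra.induction_linear with
  | zero => simp
  | add f g hf hg => rw [mul_add, add_mul, hf, hg]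
  | single g b =>
    set u := g⁻¹ * s * g with hu
    have hord : orderOf s = orderOf u := by
      have hsc : SemiconjBy g⁻¹ s u := by
        simp only [SemiconjBy, hu]
        group
      exact hsc.orderOf_eq
    have humem : u ∈ Subgroup.zpowers s := by
      have := hnorm.conj_mem s (Subgroup.mem_zpowers s) g⁻¹
      simpa [hu, mul_assoc] using this
    have hzp : Subgroup.zpowers u = Subgroup.zpowers s := by
      apply SetLike.coe_injective
      apply Set.eq_of_subset_of_ncard_le
      · exact_mod_cast Subgroup.zpowers_le.mpr humem
      · rw [← Nat.card_coe_set_eq, ← Nat.card_coe_set_eq]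
        have h1 : Nat.card (Subgroup.zpowers s) = Nat.card (Subgroup.zpowers u) := by
          rw [Nat.card_zpowers, Nat.card_zpowers, hord]
        simpa using h1.le
      · exact (Subgroup.zpowers s : Set Q).toFinite
    have hkey : ∀ i : ℕ, s ^ i * g = g * u ^ i := by
      intro i
      have : u ^ i = g⁻¹ * s ^ i * g := by
        rw [hu]
        rw [show g⁻¹ * s * g = g⁻¹ * s * (g⁻¹)⁻¹ by rw [inv_inv],
          show g⁻¹ * s ^ i * g = g⁻¹ * s ^ i * (g⁻¹)⁻¹ by rw [inv_inv]]
        exact conj_pow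
      rw [this]
      group
    calc nuel Λ s * MonoidAlgebra.single g b
        = ∑ i ∈ range (orderOf s), MonoidAlgebra.single (s ^ i * g) b := by
          unfold nuel
          rw [Finset.sum_mul]
          simp only [MonoidAlgebra.single_mul_single, one_mul]
      _ = ∑ i ∈ range (orderOf u), MonoidAlgebra.single (g * u ^ i) b := by
          rw [← hord]
          exact Finset.sum_congr rfl fun i _ => by rw [hkey i]
      _ = MonoidAlgebra.single g b * nuel Λ u := by
          unfold nuel
          rw [Finset.mul_sum]
          simp only [MonoidAlgebra.single_mul_single, mul_one]
      _ = MonoidAlgebra.single g b * nuel Λ s := by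
          rw [nuel_eq_of_zpowers_eq hzp]

lemma sum_range_mul_nuel (s : Q) (a : ℕ) :
    ∑ i ∈ range (a * orderOf s), MonoidAlgebra.single (s ^ i) (1:Λ) = a • nuel Λ s := by
  induction a with
  | zero => simp
  | succ a ih =>
      rw [Nat.succ_mul, Finset.sum_range_add, ih, succ_nsmul]
      congr 1
      refine Finset.sum_congr rfl fun i _ => ?_
      congr 1
      rw [pow_add, mul_comm a (orderOf s), pow_mul, pow_orderOf_eq_one, one_pow, one_mul]

end FiniteLevel



section Orbits

variable {Λ : Type*} [CommRing Λ] {Q : Type*} [Group Q]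

/-- Orbit equivalence for the left multiplication action of `⟨s⟩`. -/
def lrel (s : Q) : Setoid Q :=
  ⟨fun a b => ∃ i : ℤ, s ^ i * b = a,
   ⟨fun a => ⟨0, by simp⟩,
    fun {a b} h => by
      obtain ⟨i, hi⟩ := h
      exact ⟨-i, by rw [← hi, ← mul_assoc, ← zpow_add, neg_add_cancel, zpow_zero, one_mul]⟩,
    fun {a b c} h1 h2 => by
      obtain ⟨i, hi⟩ := h1; obtain ⟨j, hj⟩ := h2
      exact ⟨i + j, by rw [← hi, ← hj, ← mul_assoc, ← zpow_add]⟩⟩⟩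

noncomputable def lrep (s : Q) (q : Q) : Q := (Quotient.mk (lrel s) q).out

lemma lrep_spec (s q : Q) : ∃ i : ℤ, s ^ i * q = lrep s q := Quotient.mk_out (s := lrel s) q

lemma lrep_eq (s : Q) {a b : Q} (h : ∃ i : ℤ, s ^ i * b = a) : lrep s a = lrep s b := by
  unfold lrep
  rw [Quotient.sound (s := lrel s) h]

variable [Finite Q]

lemma lrep_decomp (s q : Q) : ∃ k : ℕ, k < orderOf s ∧ s ^ k * lrep s q = q := by
  obtain ⟨i, hi⟩ := lrep_spec s q
  have h2 : s ^ (-i) * lrep s q = q := by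
    rw [← hi, ← mul_assoc, ← zpow_add, neg_add_cancel, zpow_zero, one_mul]
  obtain ⟨k, hk, hke⟩ := zpow_eq_pow_mod s (-i)
  exact ⟨k, hk, by rw [hke]; exact h2⟩

lemma lrep_k_unique (s : Q) {q : Q} {k1 k2 : ℕ} (h1 : k1 < orderOf s) (h2 : k2 < orderOf s)
    (e1 : s ^ k1 * lrep s q = q) (e2 : s ^ k2 * lrep s q = q) : k1 = k2 :=
  pow_injOn_Iio_orderOf h1 h2 (mul_right_cancel (e1.trans e2.symm))

noncomputable def lk (s q : Q) : ℕ := (lrep_decomp s q).choose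

lemma lk_lt (s q : Q) : lk s q < orderOf s := (lrep_decomp s q).choose_spec.1

lemma lk_spec (s q : Q) : s ^ lk s q * lrep s q = q := (lrep_decomp s q).choose_spec.2

/-- Kernel of left multiplication by `[s] - 1` is `ν·Λ[Q]`. -/
lemma exists_eq_nuel_mul {s : Q} {x : MonoidAlgebra Λ Q}
    (hx : MonoidAlgebra.single s 1 * x = x) : ∃ y, x = nuel Λ s * y := by
  classical
  have hx1 : ∀ q, x.coeff (s * q) = x.coeff q := by
    intro q
    have := congrArg (fun f : MonoidAlgebra Λ Q => f.coeff (s * q)) hx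
    simpa [MonoidAlgebra.coeff_single_mul_apply, inv_mul_cancel_left] using this.symm
  have hxn : ∀ (k : ℕ) (q : Q), x.coeff (s ^ k * q) = x.coeff q := by
    intro k
    induction k with
    | zero => simp
    | succ k ih =>
        intro q
        rw [pow_succ', mul_assoc, hx1, ih]
  have hxz : ∀ (i : ℤ) (q : Q), x.coeff (s ^ i * q) = x.coeff q := by
    intro i q
    obtain ⟨k, _, hk⟩ := zpow_eq_pow_mod s i
    rw [← hk, hxn]
  set yy : MonoidAlgebra Λ Q :=
    MonoidAlgebra.ofCoeff <| Finsupp.equivFunOnFinite.symm (fun q => if lrep s q = q then x.coeff q else 0) with hyy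
  have hyyval : ∀ q, yy.coeff q = if lrep s q = q then x.coeff q else 0 := fun q => by
    rw [hyy, MonoidAlgebra.coeff_ofCoeff]; exact rfl
  refine ⟨yy, ?_⟩
  apply MonoidAlgebra.ext
  apply Finsupp.ext
  intro q
  have expand : (nuel Λ s * yy).coeff q
      = ∑ i ∈ Finset.range (orderOf s),
          (if lrep s q = (s ^ i)⁻¹ * q then x.coeff q else 0) := by
    unfold nuel
    rw [Finset.sum_mul, MonoidAlgebra.coeff_sum, Finsupp.finset_sum_apply]
    refine Finset.sum_congr rfl fun i _ => ?_
    rw [MonoidAlgebra.coeff_single_mul_apply, one_mul, hyyval]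
    have hrep : lrep s ((s ^ i)⁻¹ * q) = lrep s q :=
      lrep_eq s ⟨-(i:ℤ), by rw [zpow_neg, zpow_natCast]⟩
    have hval : x.coeff ((s ^ i)⁻¹ * q) = x.coeff q := by
      have := hxz (-(i:ℤ)) q
      rwa [zpow_neg, zpow_natCast] at this
    rw [hrep, hval]
  have hcond : lrep s q = (s ^ lk s q)⁻¹ * q := by
    rw [eq_inv_mul_iff_mul_eq, lk_spec]
  rw [expand, Finset.sum_eq_single (lk s q)
    (fun i hi hne => if_neg (fun hcon => hne ((lrep_k_unique s (lk_lt s q)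
      (Finset.mem_range.mp hi) (lk_spec s q)
      (by rw [hcon, mul_inv_cancel_left])).symm)))
    (fun h => absurd (Finset.mem_range.mpr (lk_lt s q)) h), if_pos hcond]

/-- If `ν·y = 0` then `y` is in the image of left multiplication by `[s] - 1`. -/
lemma exists_solution_left {s : Q} {y : MonoidAlgebra Λ Q}
    (hy : nuel Λ s * y = 0) : ∃ x, MonoidAlgebra.single s 1 * x - x = y := by
  classical
  have hn : 0 < orderOf s := orderOf_pos s
  have hsum : ∀ q, ∑ i ∈ Finset.range (orderOf s), y.coeff ((s ^ i)⁻¹ * q) = 0 := by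
    intro q
    have := congrArg (fun f : MonoidAlgebra Λ Q => f.coeff q) hy
    simp only [MonoidAlgebra.coeff_zero, Finsupp.coe_zero, Pi.zero_apply] at this
    rw [← this]
    unfold nuel
    rw [Finset.sum_mul, MonoidAlgebra.coeff_sum, Finsupp.finset_sum_apply]
    exact Finset.sum_congr rfl fun i _ => by
      rw [MonoidAlgebra.coeff_single_mul_apply, one_mul]
  have horb : ∀ r : Q, y.coeff (s ^ 0 * r) + ∑ j ∈ Finset.Icc 1 (orderOf s - 1), y.coeff (s ^ j * r) = 0 := by
    intro r
    have h0 := hsum (s ^ (orderOf s - 1) * r)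
    have hterm : ∀ i ∈ Finset.range (orderOf s),
        y.coeff ((s ^ i)⁻¹ * (s ^ (orderOf s - 1) * r)) = y.coeff (s ^ (orderOf s - 1 - i) * r) := by
      intro i hi
      congr 1
      rw [← mul_assoc]
      congr 1
      have hle : i ≤ orderOf s - 1 := by
        have := Finset.mem_range.mp hi; omega
      have hsp : s ^ (orderOf s - 1) = s ^ i * s ^ (orderOf s - 1 - i) := by
        rw [← pow_add]; congr 1; omega
      rw [hsp, inv_mul_cancel_left]
    rw [Finset.sum_congr rfl hterm] at h0
    rw [← Finset.sum_range_reflect] at h0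
    have hterm2 : ∀ j ∈ Finset.range (orderOf s),
        y.coeff (s ^ (orderOf s - 1 - (orderOf s - 1 - j)) * r) = y.coeff (s ^ j * r) := by
      intro j hj
      congr 3
      have := Finset.mem_range.mp hj; omega
    rw [Finset.sum_congr rfl hterm2] at h0
    have hsplit : ∑ j ∈ Finset.range (orderOf s), y.coeff (s ^ j * r)
        = y.coeff (s ^ 0 * r) + ∑ j ∈ Finset.Icc 1 (orderOf s - 1), y.coeff (s ^ j * r) := by
      rw [Finset.range_eq_Ico, Finset.sum_eq_sum_Ico_succ_bot hn]
      congr 1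
    rw [hsplit] at h0
    exact h0
  set xx : MonoidAlgebra Λ Q := MonoidAlgebra.ofCoeff <| Finsupp.equivFunOnFinite.symm
    (fun q => - ∑ j ∈ Finset.Icc 1 (lk s q), y.coeff (s ^ j * lrep s q)) with hxx
  have hxxval : ∀ q, xx.coeff q = - ∑ j ∈ Finset.Icc 1 (lk s q), y.coeff (s ^ j * lrep s q) := fun q => by
    rw [hxx, MonoidAlgebra.coeff_ofCoeff]; exact rfl
  refine ⟨xx, ?_⟩
  apply MonoidAlgebra.ext
  apply Finsupp.ext
  intro q
  rw [MonoidAlgebra.coeff_sub, Finsupp.sub_apply, MonoidAlgebra.coeff_single_mul_apply, one_mul, hxxval, hxxval]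
  have hrep' : lrep s (s⁻¹ * q) = lrep s q :=
    lrep_eq s ⟨-1, by rw [zpow_neg_one]⟩
  by_cases hk : lk s q = 0
  · have hq0 : lrep s q = q := by
      have := lk_spec s q
      rwa [hk, pow_zero, one_mul] at this
    have hsinv : s ^ (orderOf s - 1) = s⁻¹ := by
      rw [eq_inv_iff_mul_eq_one, ← pow_succ]
      have : orderOf s - 1 + 1 = orderOf s := by omega
      rw [this, pow_orderOf_eq_one]
    have e2 : s ^ (orderOf s - 1) * lrep s (s⁻¹ * q) = s⁻¹ * q := by
      rw [hrep', hq0, hsinv]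
    have hlk' : lk s (s⁻¹ * q) = orderOf s - 1 :=
      lrep_k_unique s (lk_lt s (s⁻¹ * q)) (by omega) (lk_spec s (s⁻¹ * q)) e2
    rw [hlk', hrep', hq0, hk]
    rw [show Finset.Icc 1 0 = (∅ : Finset ℕ) from Finset.Icc_eq_empty_of_lt (by norm_num)]
    rw [Finset.sum_empty, neg_zero, sub_zero]
    have h0 := horb q
    rw [pow_zero, one_mul] at h0
    linear_combination -h0
  · obtain ⟨K, hKeq⟩ : ∃ K, lk s q = K + 1 := ⟨lk s q - 1, by omega⟩
    have e2 : s ^ K * lrep s (s⁻¹ * q) = s⁻¹ * q := by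
      rw [hrep']
      apply mul_left_cancel (a := s)
      rw [mul_inv_cancel_left, ← mul_assoc, ← pow_succ', ← hKeq, lk_spec]
    have hlk' : lk s (s⁻¹ * q) = K :=
      lrep_k_unique s (lk_lt s (s⁻¹ * q)) (by have := lk_lt s q; omega)
        (lk_spec s (s⁻¹ * q)) e2
    rw [hlk', hrep', hKeq]
    rw [Finset.sum_Icc_succ_top (by omega : 1 ≤ K + 1)]
    have hq : s ^ (K + 1) * lrep s q = q := by rw [← hKeq, lk_spec]
    rw [hq]
    ring

end Orbits



section OrbitsRight

variable {Λ : Type*} [CommRing Λ] {Q : Type*} [Group Q]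

/-- Orbit equivalence for the right multiplication action of `⟨s⟩`. -/
def rrel (s : Q) : Setoid Q :=
  ⟨fun a b => ∃ i : ℤ, b * s ^ i = a,
   ⟨fun a => ⟨0, by simp⟩,
    fun {a b} h => by
      obtain ⟨i, hi⟩ := h
      exact ⟨-i, by rw [← hi, mul_assoc, ← zpow_add, add_neg_cancel, zpow_zero, mul_one]⟩,
    fun {a b c} h1 h2 => by
      obtain ⟨i, hi⟩ := h1; obtain ⟨j, hj⟩ := h2
      exact ⟨j + i, by rw [← hi, ← hj, mul_assoc, ← zpow_add]⟩⟩⟩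

noncomputable def rrep (s : Q) (q : Q) : Q := (Quotient.mk (rrel s) q).out

lemma rrep_spec (s q : Q) : ∃ i : ℤ, q * s ^ i = rrep s q := Quotient.mk_out (s := rrel s) q

lemma rrep_eq (s : Q) {a b : Q} (h : ∃ i : ℤ, b * s ^ i = a) : rrep s a = rrep s b := by
  unfold rrep
  rw [Quotient.sound (s := rrel s) h]

variable [Finite Q]

lemma rrep_decomp (s q : Q) : ∃ k : ℕ, k < orderOf s ∧ rrep s q * s ^ k = q := by
  obtain ⟨i, hi⟩ := rrep_spec s q
  have h2 : rrep s q * s ^ (-i) = q := by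
    rw [← hi, mul_assoc, ← zpow_add, add_neg_cancel, zpow_zero, mul_one]
  obtain ⟨k, hk, hke⟩ := zpow_eq_pow_mod s (-i)
  exact ⟨k, hk, by rw [hke]; exact h2⟩

lemma rrep_k_unique (s : Q) {q : Q} {k1 k2 : ℕ} (h1 : k1 < orderOf s) (h2 : k2 < orderOf s)
    (e1 : rrep s q * s ^ k1 = q) (e2 : rrep s q * s ^ k2 = q) : k1 = k2 :=
  pow_injOn_Iio_orderOf h1 h2 (mul_left_cancel (e1.trans e2.symm))

noncomputable def rk (s q : Q) : ℕ := (rrep_decomp s q).choose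

lemma rk_lt (s q : Q) : rk s q < orderOf s := (rrep_decomp s q).choose_spec.1

lemma rk_spec (s q : Q) : rrep s q * s ^ rk s q = q := (rrep_decomp s q).choose_spec.2

/-- Kernel of right multiplication by `[s] - 1` is `Λ[Q]·ν`. -/
lemma exists_eq_mul_nuel {s : Q} {x : MonoidAlgebra Λ Q}
    (hx : x * MonoidAlgebra.single s 1 = x) : ∃ y, x = y * nuel Λ s := by
  classical
  have hx1 : ∀ q, x.coeff (q * s) = x.coeff q := by
    intro q
    have := congrArg (fun f : MonoidAlgebra Λ Q => f.coeff (q * s)) hx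
    simpa [MonoidAlgebra.coeff_mul_single_apply, mul_inv_cancel_right] using this.symm
  have hxn : ∀ (k : ℕ) (q : Q), x.coeff (q * s ^ k) = x.coeff q := by
    intro k
    induction k with
    | zero => simp
    | succ k ih =>
        intro q
        rw [pow_succ, ← mul_assoc]
        rw [hx1, ih]
  have hxz : ∀ (i : ℤ) (q : Q), x.coeff (q * s ^ i) = x.coeff q := by
    intro i q
    obtain ⟨k, _, hk⟩ := zpow_eq_pow_mod s i
    rw [← hk, hxn]
  set yy : MonoidAlgebra Λ Q :=
    MonoidAlgebra.ofCoeff <| Finsupp.equivFunOnFinite.symm (fun q => if rrep s q = q then x.coeff q else 0) with hyy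
  have hyyval : ∀ q, yy.coeff q = if rrep s q = q then x.coeff q else 0 := fun q => by
    rw [hyy, MonoidAlgebra.coeff_ofCoeff]; exact rfl
  refine ⟨yy, ?_⟩
  apply MonoidAlgebra.ext
  apply Finsupp.ext
  intro q
  have expand : (yy * nuel Λ s).coeff q
      = ∑ i ∈ Finset.range (orderOf s),
          (if rrep s q = q * (s ^ i)⁻¹ then x.coeff q else 0) := by
    unfold nuel
    rw [Finset.mul_sum, MonoidAlgebra.coeff_sum, Finsupp.finset_sum_apply]
    refine Finset.sum_congr rfl fun i _ => ?_
    rw [MonoidAlgebra.coeff_mul_single_apply, mul_one, hyyval]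
    have hrep : rrep s (q * (s ^ i)⁻¹) = rrep s q :=
      rrep_eq s ⟨-(i:ℤ), by rw [zpow_neg, zpow_natCast]⟩
    have hval : x.coeff (q * (s ^ i)⁻¹) = x.coeff q := by
      have := hxz (-(i:ℤ)) q
      rwa [zpow_neg, zpow_natCast] at this
    rw [hrep, hval]
  have hcond : rrep s q = q * (s ^ rk s q)⁻¹ := by
    rw [eq_mul_inv_iff_mul_eq, rk_spec]
  rw [expand, Finset.sum_eq_single (rk s q)
    (fun i hi hne => if_neg (fun hcon => hne ((rrep_k_unique s (rk_lt s q)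
      (Finset.mem_range.mp hi) (rk_spec s q)
      (by rw [hcon, inv_mul_cancel_right])).symm)))
    (fun h => absurd (Finset.mem_range.mpr (rk_lt s q)) h), if_pos hcond]

/-- If `y·ν = 0` then `y` is in the image of right multiplication by `[s] - 1`. -/
lemma exists_solution_right {s : Q} {y : MonoidAlgebra Λ Q}
    (hy : y * nuel Λ s = 0) : ∃ x, x * MonoidAlgebra.single s 1 - x = y := by
  classical
  have hn : 0 < orderOf s := orderOf_pos s
  have hsum : ∀ q, ∑ i ∈ Finset.range (orderOf s), y.coeff (q * (s ^ i)⁻¹) = 0 := by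
    intro q
    have := congrArg (fun f : MonoidAlgebra Λ Q => f.coeff q) hy
    simp only [MonoidAlgebra.coeff_zero, Finsupp.coe_zero, Pi.zero_apply] at this
    rw [← this]
    unfold nuel
    rw [Finset.mul_sum, MonoidAlgebra.coeff_sum, Finsupp.finset_sum_apply]
    exact Finset.sum_congr rfl fun i _ => by
      rw [MonoidAlgebra.coeff_mul_single_apply, mul_one]
  have horb : ∀ r : Q, y.coeff (r * s ^ 0) + ∑ j ∈ Finset.Icc 1 (orderOf s - 1), y.coeff (r * s ^ j) = 0 := by
    intro r
    have h0 := hsum (r * s ^ (orderOf s - 1))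
    have hterm : ∀ i ∈ Finset.range (orderOf s),
        y.coeff (r * s ^ (orderOf s - 1) * (s ^ i)⁻¹) = y.coeff (r * s ^ (orderOf s - 1 - i)) := by
      intro i hi
      congr 1
      rw [mul_assoc]
      congr 1
      have hle : i ≤ orderOf s - 1 := by
        have := Finset.mem_range.mp hi; omega
      have hsp : s ^ (orderOf s - 1) = s ^ (orderOf s - 1 - i) * s ^ i := by
        rw [← pow_add]; congr 1; omega
      rw [hsp, mul_inv_cancel_right]
    rw [Finset.sum_congr rfl hterm] at h0
    rw [← Finset.sum_range_reflect] at h0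
    have hterm2 : ∀ j ∈ Finset.range (orderOf s),
        y.coeff (r * s ^ (orderOf s - 1 - (orderOf s - 1 - j))) = y.coeff (r * s ^ j) := by
      intro j hj
      congr 3
      have := Finset.mem_range.mp hj; omega
    rw [Finset.sum_congr rfl hterm2] at h0
    have hsplit : ∑ j ∈ Finset.range (orderOf s), y.coeff (r * s ^ j)
        = y.coeff (r * s ^ 0) + ∑ j ∈ Finset.Icc 1 (orderOf s - 1), y.coeff (r * s ^ j) := by
      rw [Finset.range_eq_Ico, Finset.sum_eq_sum_Ico_succ_bot hn]
      congr 1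
    rw [hsplit] at h0
    exact h0
  set xx : MonoidAlgebra Λ Q := MonoidAlgebra.ofCoeff <| Finsupp.equivFunOnFinite.symm
    (fun q => - ∑ j ∈ Finset.Icc 1 (rk s q), y.coeff (rrep s q * s ^ j)) with hxx
  have hxxval : ∀ q, xx.coeff q = - ∑ j ∈ Finset.Icc 1 (rk s q), y.coeff (rrep s q * s ^ j) := fun q => by
    rw [hxx, MonoidAlgebra.coeff_ofCoeff]; exact rfl
  refine ⟨xx, ?_⟩
  apply MonoidAlgebra.ext
  apply Finsupp.ext
  intro q
  rw [MonoidAlgebra.coeff_sub, Finsupp.sub_apply, MonoidAlgebra.coeff_mul_single_apply, mul_one, hxxval, hxxval]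
  have hrep' : rrep s (q * s⁻¹) = rrep s q :=
    rrep_eq s ⟨-1, by rw [zpow_neg_one]⟩
  by_cases hk : rk s q = 0
  · have hq0 : rrep s q = q := by
      have := rk_spec s q
      rwa [hk, pow_zero, mul_one] at this
    have hsinv : s ^ (orderOf s - 1) = s⁻¹ := by
      rw [eq_inv_iff_mul_eq_one, ← pow_succ]
      have : orderOf s - 1 + 1 = orderOf s := by omega
      rw [this, pow_orderOf_eq_one]
    have e2 : rrep s (q * s⁻¹) * s ^ (orderOf s - 1) = q * s⁻¹ := by
      rw [hrep', hq0, hsinv]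
    have hlk' : rk s (q * s⁻¹) = orderOf s - 1 :=
      rrep_k_unique s (rk_lt s (q * s⁻¹)) (by omega) (rk_spec s (q * s⁻¹)) e2
    rw [hlk', hrep', hq0, hk]
    rw [show Finset.Icc 1 0 = (∅ : Finset ℕ) from Finset.Icc_eq_empty_of_lt (by norm_num)]
    rw [Finset.sum_empty, neg_zero, sub_zero]
    have h0 := horb q
    rw [pow_zero, mul_one] at h0
    linear_combination -h0
  · obtain ⟨K, hKeq⟩ : ∃ K, rk s q = K + 1 := ⟨rk s q - 1, by omega⟩
    have e2 : rrep s (q * s⁻¹) * s ^ K = q * s⁻¹ := by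
      rw [hrep']
      apply mul_right_cancel (b := s)
      rw [inv_mul_cancel_right, mul_assoc, ← pow_succ, ← hKeq, rk_spec]
    have hlk' : rk s (q * s⁻¹) = K :=
      rrep_k_unique s (rk_lt s (q * s⁻¹)) (by have := rk_lt s q; omega)
        (rk_spec s (q * s⁻¹)) e2
    rw [hlk', hrep', hKeq]
    rw [Finset.sum_Icc_succ_top (by omega : 1 ≤ K + 1)]
    have hq : rrep s q * s ^ (K + 1) = q := by rw [← hKeq, rk_spec]
    rw [hq]
    ring

end OrbitsRight



section QuotientLevel

variable {Λ : Type*} [CommRing Λ] {G : Type*} [Group G] [TopologicalSpace G]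
  [IsTopologicalGroup G] [CompactSpace G]

instance (H : OpenNormalSubgroup G) : Finite (G ⧸ H.toSubgroup) :=
  Subgroup.quotient_finite_of_isOpen _ H.isOpen'

/-- The group-level transition map. -/
noncomputable def qmapHom {H K : OpenNormalSubgroup G} (h : H.toSubgroup ≤ K.toSubgroup) :
    (G ⧸ H.toSubgroup) →* (G ⧸ K.toSubgroup) :=
  QuotientGroup.map H.toSubgroup K.toSubgroup (MonoidHom.id G) (by rwa [Subgroup.comap_id])

lemma qmapHom_mk {H K : OpenNormalSubgroup G} (h : H.toSubgroup ≤ K.toSubgroup) (g : G) :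
    qmapHom h (QuotientGroup.mk g : G ⧸ H.toSubgroup) = (QuotientGroup.mk g : G ⧸ K.toSubgroup) := by
  unfold qmapHom
  rw [QuotientGroup.map_mk]
  rfl

lemma cgrTrans_single {H K : OpenNormalSubgroup G} (h : H.toSubgroup ≤ K.toSubgroup)
    (q : G ⧸ H.toSubgroup) (b : Λ) :
    cgrTrans Λ G h (MonoidAlgebra.single q b) = MonoidAlgebra.single (qmapHom h q) b := by
  unfold cgrTrans qmapHom
  simp [MonoidAlgebra.mapDomainRingHom, Finsupp.mapDomain_single]

lemma cgrTrans_mk_single {H K : OpenNormalSubgroup G} (h : H.toSubgroup ≤ K.toSubgroup)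
    (g : G) (b : Λ) :
    cgrTrans Λ G h (MonoidAlgebra.single (QuotientGroup.mk g : G ⧸ H.toSubgroup) b)
      = MonoidAlgebra.single (QuotientGroup.mk g : G ⧸ K.toSubgroup) b := by
  rw [cgrTrans_single, qmapHom_mk]

lemma cgrTrans_trans {H K L : OpenNormalSubgroup G} (h1 : H.toSubgroup ≤ K.toSubgroup)
    (h2 : K.toSubgroup ≤ L.toSubgroup) (v : MonoidAlgebra Λ (G ⧸ H.toSubgroup)) :
    cgrTrans Λ G h2 (cgrTrans Λ G h1 v) = cgrTrans Λ G (le_trans h1 h2) v := by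
  induction v using MonoidAlgebra.induction_linear with
  | zero => simp
  | add f g hf hg => rw [map_add, map_add, map_add, hf, hg]
  | single q b =>
      obtain ⟨g, rfl⟩ := QuotientGroup.mk_surjective q
      rw [cgrTrans_mk_single, cgrTrans_mk_single, cgrTrans_mk_single]

lemma mk_pow_eq {H : OpenNormalSubgroup G} (g : G) (i : ℕ) :
    (QuotientGroup.mk g : G ⧸ H.toSubgroup) ^ i = QuotientGroup.mk (g ^ i) :=
  (QuotientGroup.mk_pow H.toSubgroup g i)

lemma mk_orderOf_dvd {H K : OpenNormalSubgroup G} (h : H.toSubgroup ≤ K.toSubgroup) (g : G) :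
    orderOf (QuotientGroup.mk g : G ⧸ K.toSubgroup)
      ∣ orderOf (QuotientGroup.mk g : G ⧸ H.toSubgroup) := by
  have := orderOf_map_dvd (qmapHom h) (QuotientGroup.mk g)
  rwa [qmapHom_mk] at this

lemma cgrTrans_nuel {H K : OpenNormalSubgroup G} (h : H.toSubgroup ≤ K.toSubgroup) (g : G) :
    cgrTrans Λ G h (nuel Λ (QuotientGroup.mk g : G ⧸ H.toSubgroup))
      = (orderOf (QuotientGroup.mk g : G ⧸ H.toSubgroup)
          / orderOf (QuotientGroup.mk g : G ⧸ K.toSubgroup)) •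
            nuel Λ (QuotientGroup.mk g : G ⧸ K.toSubgroup) := by
  have hdvd := mk_orderOf_dvd h g
  unfold nuel
  rw [map_sum]
  have hterm : ∀ i ∈ Finset.range (orderOf (QuotientGroup.mk g : G ⧸ H.toSubgroup)),
      cgrTrans Λ G h (MonoidAlgebra.single ((QuotientGroup.mk g : G ⧸ H.toSubgroup) ^ i) 1)
        = MonoidAlgebra.single ((QuotientGroup.mk g : G ⧸ K.toSubgroup) ^ i) (1:Λ) := by
    intro i _
    rw [mk_pow_eq, cgrTrans_mk_single, mk_pow_eq]
  rw [Finset.sum_congr rfl hterm]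
  have hsize : orderOf (QuotientGroup.mk g : G ⧸ H.toSubgroup)
      = (orderOf (QuotientGroup.mk g : G ⧸ H.toSubgroup)
          / orderOf (QuotientGroup.mk g : G ⧸ K.toSubgroup))
        * orderOf (QuotientGroup.mk g : G ⧸ K.toSubgroup) := (Nat.div_mul_cancel hdvd).symm
  conv_lhs => rw [hsize]
  exact sum_range_mul_nuel _ _

lemma cgrTrans_nuel_mul {m : ℕ} (hmΛ : (m : Λ) = 0) {H K : OpenNormalSubgroup G}
    (h : H.toSubgroup ≤ K.toSubgroup) (g : G)
    (hd : m * orderOf (QuotientGroup.mk g : G ⧸ K.toSubgroup)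
        ∣ orderOf (QuotientGroup.mk g : G ⧸ H.toSubgroup))
    (w : MonoidAlgebra Λ (G ⧸ H.toSubgroup)) :
    cgrTrans Λ G h (nuel Λ (QuotientGroup.mk g : G ⧸ H.toSubgroup) * w) = 0 := by
  rw [map_mul, cgrTrans_nuel]
  set nH := orderOf (QuotientGroup.mk g : G ⧸ H.toSubgroup)
  set nK := orderOf (QuotientGroup.mk g : G ⧸ K.toSubgroup)
  have hnK : 0 < nK := orderOf_pos _
  have hmq : m ∣ nH / nK := by
    obtain ⟨c, hc⟩ := hd
    refine ⟨c, ?_⟩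
    rw [hc]
    rw [mul_comm m nK, mul_assoc, Nat.mul_div_cancel_left _ hnK]
  obtain ⟨c, hc⟩ := hmq
  rw [hc, ← Nat.cast_smul_eq_nsmul Λ, smul_mul_assoc]
  have : ((m * c : ℕ) : Λ) = 0 := by
    push_cast
    rw [hmΛ, zero_mul]
  rw [this, zero_smul]

lemma cgrTrans_mul_nuel {m : ℕ} (hmΛ : (m : Λ) = 0) {H K : OpenNormalSubgroup G}
    (h : H.toSubgroup ≤ K.toSubgroup) (g : G)
    (hd : m * orderOf (QuotientGroup.mk g : G ⧸ K.toSubgroup)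
        ∣ orderOf (QuotientGroup.mk g : G ⧸ H.toSubgroup))
    (w : MonoidAlgebra Λ (G ⧸ H.toSubgroup)) :
    cgrTrans Λ G h (w * nuel Λ (QuotientGroup.mk g : G ⧸ H.toSubgroup)) = 0 := by
  rw [map_mul, cgrTrans_nuel]
  set nH := orderOf (QuotientGroup.mk g : G ⧸ H.toSubgroup)
  set nK := orderOf (QuotientGroup.mk g : G ⧸ K.toSubgroup)
  have hnK : 0 < nK := orderOf_pos _
  have hmq : m ∣ nH / nK := by
    obtain ⟨c, hc⟩ := hd
    refine ⟨c, ?_⟩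
    rw [hc]
    rw [mul_comm m nK, mul_assoc, Nat.mul_div_cancel_left _ hnK]
  obtain ⟨c, hc⟩ := hmq
  rw [hc, ← Nat.cast_smul_eq_nsmul Λ, mul_smul_comm]
  have : ((m * c : ℕ) : Λ) = 0 := by
    push_cast
    rw [hmΛ, zero_mul]
  rw [this, zero_smul]

end QuotientLevel



section Deep

lemma exists_open_relIndex
    {G : Type*} [Group G] [TopologicalSpace G]
    (m : ℕ) (hm : 0 < m)
    (A : Set ℕ) (hA : ∀ ℓ ∈ A, Nat.Prime ℓ) (hAm : ∀ ℓ : ℕ, ℓ.Prime → ℓ ∣ m → ℓ ∈ A)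
    (N : Subgroup G)
    (e : ↥N ≃* Multiplicative (ZA A hA)) (he : Continuous e) (he' : Continuous e.symm)
    (V : Subgroup ↥N) (hV : IsOpen (V : Set ↥N)) :
    ∃ U : Subgroup ↥N, IsOpen (U : Set ↥N) ∧ U ≤ V ∧ m ∣ U.relIndex V := by
  classical
  set ψ : ZA A hA → ↥N := fun z => e.symm (Multiplicative.ofAdd z) with hψdef
  have hψc : Continuous ψ := he'.comp continuous_ofAdd
  set S : Set (ZA A hA) := ψ ⁻¹' (V : Set ↥N) with hSdef
  have hSopen : IsOpen S := hV.preimage hψc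
  have h0S : (0 : ZA A hA) ∈ S := by
    show ψ 0 ∈ (V : Set ↥N)
    have h1 : ψ 0 = 1 := by
      show e.symm (Multiplicative.ofAdd 0) = 1
      rw [ofAdd_zero, map_one]
    rw [h1]; exact V.one_mem
  obtain ⟨I, u, hIu, hpi⟩ := isOpen_pi_iff.mp hSopen 0 h0S
  -- radii around 0 in each relevant coordinate
  have hrad : ∀ a : A, ∃ c : ℕ, a ∈ I →
      ∀ z : (@PadicInt a.1 ⟨hA a.1 a.2⟩), ‖z‖ ≤ (a.1:ℝ) ^ (-(c:ℤ)) → z ∈ u a := by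
    intro a
    by_cases haI : a ∈ I
    · haveI : Fact (Nat.Prime a.1) := ⟨hA a.1 a.2⟩
      obtain ⟨ε, hε, hball⟩ := Metric.isOpen_iff.mp (hIu a haI).1 0 (hIu a haI).2
      have hp1 : (1:ℝ) < (a.1:ℝ) := by exact_mod_cast (hA a.1 a.2).one_lt
      obtain ⟨c, hc⟩ := exists_pow_lt_of_lt_one hε (inv_lt_one_of_one_lt₀ hp1)
      refine ⟨c, fun _ z hz => hball ?_⟩
      rw [mem_ball_zero_iff]
      calc ‖z‖ ≤ (a.1:ℝ) ^ (-(c:ℤ)) := hz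
        _ = ((a.1:ℝ))⁻¹ ^ c := by rw [zpow_neg, ← inv_zpow, zpow_natCast]
        _ < ε := hc
    · exact ⟨0, fun h => absurd h haI⟩
  choose crad hcrad using hrad
  -- prime data
  set P := {ℓ : ℕ // ℓ ∈ m.primeFactors} with hP
  have hfact : ∀ ℓ : P, Fact (Nat.Prime ℓ.1) := fun ℓ => ⟨Nat.prime_of_mem_primeFactors ℓ.2⟩
  let aA : P → A := fun ℓ =>
    ⟨ℓ.1, hAm ℓ.1 (Nat.prime_of_mem_primeFactors ℓ.2) (Nat.dvd_of_mem_primeFactors ℓ.2)⟩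
  let dd : P → ℕ := fun ℓ => crad (aA ℓ) + m.factorization ℓ.1
  let gadd : ∀ ℓ : P, ZA A hA →+ ZMod (ℓ.1 ^ dd ℓ) := fun ℓ =>
    (@PadicInt.toZModPow ℓ.1 (hfact ℓ) (dd ℓ)).toAddMonoidHom.comp
      (Pi.evalAddMonoidHom (fun a : A => @PadicInt a.1 ⟨hA a.1 a.2⟩) (aA ℓ))
  let gmul : ∀ ℓ : P, ↥N →* Multiplicative (ZMod (ℓ.1 ^ dd ℓ)) := fun ℓ =>
    (AddMonoidHom.toMultiplicative (gadd ℓ)).comp e.toMonoidHom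
  refine ⟨(⨅ ℓ : P, (gmul ℓ).ker) ⊓ V, ?_, inf_le_right, ?_⟩
  · -- openness
    have hker : ∀ ℓ : P, IsOpen (((gmul ℓ).ker : Subgroup ↥N) : Set ↥N) := by
      intro ℓ
      haveI := hfact ℓ
      have hchar : (((gmul ℓ).ker : Subgroup ↥N) : Set ↥N) =
          (fun x : ↥N => (Multiplicative.toAdd (e x)) (aA ℓ)) ⁻¹'
            {z : @PadicInt ℓ.1 (hfact ℓ) | ‖z‖ < (ℓ.1:ℝ) ^ (-(dd ℓ:ℤ) + 1)} := by
        ext x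
        simp only [SetLike.mem_coe, MonoidHom.mem_ker, Set.mem_preimage, Set.mem_setOf_eq]
        have h1 : gmul ℓ x = Multiplicative.ofAdd
            (@PadicInt.toZModPow ℓ.1 (hfact ℓ) (dd ℓ) ((Multiplicative.toAdd (e x)) (aA ℓ))) := rfl
        rw [h1, ofAdd_eq_one, ← RingHom.mem_ker, PadicInt.ker_toZModPow,
          ← PadicInt.norm_le_pow_iff_mem_span_pow]
        exact PadicInt.norm_le_pow_iff_norm_lt_pow_add_one _ _
      rw [hchar]
      apply IsOpen.preimage
      · exact (continuous_apply (aA ℓ)).comp (continuous_toAdd.comp he)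
      · have : {z : @PadicInt ℓ.1 (hfact ℓ) | ‖z‖ < (ℓ.1:ℝ) ^ (-(dd ℓ:ℤ) + 1)}
            = Metric.ball 0 ((ℓ.1:ℝ) ^ (-(dd ℓ:ℤ) + 1)) := by
          ext z; rw [mem_ball_zero_iff]; rfl
        rw [this]
        exact Metric.isOpen_ball
    have : ((((⨅ ℓ : P, (gmul ℓ).ker) ⊓ V) : Subgroup ↥N) : Set ↥N)
        = (⋂ ℓ : P, (((gmul ℓ).ker : Subgroup ↥N) : Set ↥N)) ∩ (V : Set ↥N) := by
      rw [Subgroup.coe_inf, Subgroup.coe_iInf]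
    rw [this]
    exact IsOpen.inter (isOpen_iInter_of_finite hker) hV
  · -- divisibility
    have hmfac : ∏ p ∈ m.primeFactors, p ^ m.factorization p = m := by
      have h := Nat.factorization_prod_pow_eq_self hm.ne'
      rwa [Finsupp.prod, Nat.support_factorization] at h
    have keyZ : (∏ p ∈ m.primeFactors, ((p ^ m.factorization p : ℕ) : ℤ))
        ∣ ((((⨅ ℓ : P, (gmul ℓ).ker) ⊓ V).relIndex V : ℕ) : ℤ) := by
      apply Finset.prod_dvd_of_coprime
      · intro p hp q hq hpq
        have hpp := Nat.prime_of_mem_primeFactors (by simpa using hp)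
        have hqq := Nat.prime_of_mem_primeFactors (by simpa using hq)
        have : Nat.Coprime (p ^ m.factorization p) (q ^ m.factorization q) :=
          Nat.Coprime.pow _ _ ((Nat.coprime_primes hpp hqq).mpr hpq)
        exact Nat.isCoprime_iff_coprime.mpr this
      · intro ℓ hℓ
        rw [Int.natCast_dvd_natCast]
        set ℓP : P := ⟨ℓ, hℓ⟩
        haveI := hfact ℓP
        set T : Subgroup ↥N := (gmul ℓP).ker ⊓ V with hT
        have hUT : (⨅ ℓ : P, (gmul ℓ).ker) ⊓ V ≤ T :=
          le_inf (inf_le_left.trans (iInf_le _ ℓP)) inf_le_right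
        have hTV : T ≤ V := inf_le_right
        have hrel : T.relIndex V ∣ ((⨅ ℓ : P, (gmul ℓ).ker) ⊓ V).relIndex V :=
          Dvd.intro_left _ (Subgroup.relIndex_mul_relIndex _ _ _ hUT hTV)
        refine dvd_trans ?_ hrel
        rw [hT, Subgroup.inf_relIndex_right]
        have hker_eq : ((gmul ℓP).comp V.subtype).ker = (gmul ℓP).ker.subgroupOf V := by
          ext x
          simp [Subgroup.mem_subgroupOf, MonoidHom.mem_ker]
        have hres : (gmul ℓP).ker.relIndex V = Nat.card ((gmul ℓP).comp V.subtype).range := by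
          rw [← Subgroup.index_ker, hker_eq]
          rfl
        rw [hres]
        -- the special element
        set z0 : ZA A hA := Pi.single (aA ℓP) ((ℓ : @PadicInt ℓ (hfact ℓP)) ^ crad (aA ℓP)) with hz0def
        have hz0S : z0 ∈ S := by
          apply hpi
          rw [Set.mem_pi]
          intro a ha
          by_cases hae : a = aA ℓP
          · subst hae
            rw [Pi.single_eq_same]
            apply hcrad (aA ℓP) ha
            exact le_of_eq (by exact_mod_cast @PadicInt.norm_p_pow ℓ (hfact ℓP) (crad (aA ℓP)))
          · rw [Pi.single_eq_of_ne hae]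
            exact (hIu a ha).2
        have hx0V : ψ z0 ∈ V := hz0S
        have hval : (gmul ℓP) (ψ z0)
            = Multiplicative.ofAdd (((ℓ : ZMod (ℓ ^ dd ℓP))) ^ crad (aA ℓP)) := by
          have h1 : e (ψ z0) = Multiplicative.ofAdd z0 := by
            rw [hψdef]; exact e.apply_symm_apply _
          show Multiplicative.ofAdd ((gadd ℓP) (Multiplicative.toAdd (e (ψ z0)))) = _
          rw [h1]
          congr 1
          show (@PadicInt.toZModPow ℓ (hfact ℓP) (dd ℓP)) (z0 (aA ℓP)) = _
          rw [hz0def, Pi.single_eq_same, map_pow, map_natCast]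
        have hmem : Multiplicative.ofAdd (((ℓ : ZMod (ℓ ^ dd ℓP))) ^ crad (aA ℓP))
            ∈ ((gmul ℓP).comp V.subtype).range := ⟨⟨ψ z0, hx0V⟩, hval⟩
        have hcard := Subgroup.card_dvd_of_le (Subgroup.zpowers_le.mpr hmem)
        rw [Nat.card_zpowers, orderOf_ofAdd_eq_addOrderOf] at hcard
        have haord : addOrderOf (((ℓ : ZMod (ℓ ^ dd ℓP))) ^ crad (aA ℓP)) = ℓ ^ m.factorization ℓ := by
          have hcast : ((ℓ : ZMod (ℓ ^ dd ℓP))) ^ crad (aA ℓP)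
              = ((ℓ ^ crad (aA ℓP) : ℕ) : ZMod (ℓ ^ dd ℓP)) := by
            push_cast; rfl
          have hne : ℓ ^ dd ℓP ≠ 0 := (pow_pos (hfact ℓP).out.pos _).ne'
          rw [hcast, ZMod.addOrderOf_coe _ hne]
          have hle : crad (aA ℓP) ≤ dd ℓP := Nat.le_add_right _ _
          have hgcd : (ℓ ^ dd ℓP).gcd (ℓ ^ crad (aA ℓP)) = ℓ ^ crad (aA ℓP) :=
            Nat.gcd_eq_right (pow_dvd_pow ℓ hle)
          rw [hgcd, Nat.pow_div hle (hfact ℓP).out.pos]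
          congr 1
          show crad (aA ℓP) + m.factorization ℓ - crad (aA ℓP) = m.factorization ℓ
          omega
        rw [haord] at hcard
        exact hcard
    rw [← Nat.cast_prod] at keyZ
    have key := Int.ofNat_dvd.mp keyZ
    rwa [hmfac] at key



section ImageN

variable {G : Type*} [Group G] [TopologicalSpace G] [IsTopologicalGroup G] [CompactSpace G]

lemma image_N (N : Subgroup G) (σ : G) (hσN : σ ∈ N)
    (hσgen : closure ((Subgroup.zpowers σ : Subgroup G) : Set G) = (N : Set G))
    (H : OpenNormalSubgroup G) :
    Subgroup.map (QuotientGroup.mk' H.toSubgroup) N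
      = Subgroup.zpowers (QuotientGroup.mk σ : G ⧸ H.toSubgroup) := by
  apply le_antisymm
  · rw [Subgroup.map_le_iff_le_comap]
    set S := Subgroup.comap (QuotientGroup.mk' H.toSubgroup)
      (Subgroup.zpowers (QuotientGroup.mk σ : G ⧸ H.toSubgroup)) with hS
    have hHS : H.toSubgroup ≤ S := by
      intro h hh
      rw [hS, Subgroup.mem_comap]
      have h1 : QuotientGroup.mk' H.toSubgroup h = 1 := by
        rw [QuotientGroup.mk'_apply, QuotientGroup.eq_one_iff]; exact hh
      rw [h1]; exact Subgroup.one_mem _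
    have hSopen : IsOpen (S : Set G) := Subgroup.isOpen_mono hHS H.isOpen'
    have hSclosed : IsClosed (S : Set G) := Subgroup.isClosed_of_isOpen S hSopen
    have hzs : ((Subgroup.zpowers σ : Subgroup G) : Set G) ⊆ (S : Set G) := by
      intro x hx
      obtain ⟨k, hk⟩ := Subgroup.mem_zpowers_iff.mp hx
      have hxS : x ∈ S := by
        rw [hS, Subgroup.mem_comap, ← hk, map_zpow]
        exact Subgroup.zpow_mem _ (Subgroup.mem_zpowers _) k
      exact hxS
    intro x hx
    have hsub : (N : Set G) ⊆ (S : Set G) := by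
      rw [← hσgen]
      exact closure_minimal hzs hSclosed
    exact hsub hx
  · rw [Subgroup.zpowers_le]
    exact ⟨σ, hσN, rfl⟩

lemma orderOf_mk_eq_index (N : Subgroup G) (σ : G) (hσN : σ ∈ N)
    (hσgen : closure ((Subgroup.zpowers σ : Subgroup G) : Set G) = (N : Set G))
    (H : OpenNormalSubgroup G) :
    orderOf (QuotientGroup.mk σ : G ⧸ H.toSubgroup) = (H.toSubgroup.subgroupOf N).index := by
  have hrange : ((QuotientGroup.mk' H.toSubgroup).comp N.subtype).range
      = Subgroup.map (QuotientGroup.mk' H.toSubgroup) N := by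
    rw [MonoidHom.range_comp, Subgroup.range_subtype]
  have hker : ((QuotientGroup.mk' H.toSubgroup).comp N.subtype).ker
      = H.toSubgroup.subgroupOf N := by
    ext x
    simp [MonoidHom.mem_ker, QuotientGroup.eq_one_iff, Subgroup.mem_subgroupOf]
  calc orderOf (QuotientGroup.mk σ : G ⧸ H.toSubgroup)
      = Nat.card (Subgroup.zpowers (QuotientGroup.mk σ : G ⧸ H.toSubgroup)) :=
        (Nat.card_zpowers _).symm
    _ = Nat.card (Subgroup.map (QuotientGroup.mk' H.toSubgroup) N) := by
        rw [image_N N σ hσN hσgen H]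
    _ = Nat.card ((QuotientGroup.mk' H.toSubgroup).comp N.subtype).range := by rw [hrange]
    _ = ((QuotientGroup.mk' H.toSubgroup).comp N.subtype).ker.index :=
        (Subgroup.index_ker _).symm
    _ = (H.toSubgroup.subgroupOf N).index := by rw [hker]

lemma zpowers_mk_normal (N : Subgroup G) [N.Normal] (σ : G) (hσN : σ ∈ N)
    (hσgen : closure ((Subgroup.zpowers σ : Subgroup G) : Set G) = (N : Set G))
    (H : OpenNormalSubgroup G) :
    (Subgroup.zpowers (QuotientGroup.mk σ : G ⧸ H.toSubgroup)).Normal := by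
  rw [← image_N N σ hσN hσgen H]
  exact Subgroup.Normal.map inferInstance _ (QuotientGroup.mk'_surjective _)

variable [T2Space G] [TotallyDisconnectedSpace G]

lemma exists_deep (m : ℕ) (hm : 0 < m)
    (A : Set ℕ) (hA : ∀ ℓ ∈ A, Nat.Prime ℓ) (hAm : ∀ ℓ : ℕ, ℓ.Prime → ℓ ∣ m → ℓ ∈ A)
    (N : Subgroup G)
    (e : ↥N ≃* Multiplicative (ZA A hA)) (he : Continuous e) (he' : Continuous e.symm)
    (σ : G) (hσN : σ ∈ N)
    (hσgen : closure ((Subgroup.zpowers σ : Subgroup G) : Set G) = (N : Set G))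
    (H : OpenNormalSubgroup G) :
    ∃ H' : OpenNormalSubgroup G, H'.toSubgroup ≤ H.toSubgroup ∧
      m * orderOf (QuotientGroup.mk σ : G ⧸ H.toSubgroup)
        ∣ orderOf (QuotientGroup.mk σ : G ⧸ H'.toSubgroup) := by
  set V : Subgroup ↥N := H.toSubgroup.subgroupOf N with hV
  have hVopen : IsOpen (V : Set ↥N) := by
    have hset : (V : Set ↥N) = (Subtype.val : ↥N → G) ⁻¹' (H.toSubgroup : Set G) := by
      ext x
      simp [hV, Subgroup.mem_subgroupOf]
    rw [hset]
    exact H.isOpen'.preimage continuous_subtype_val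
  obtain ⟨U, hUopen, hUV, hUdvd⟩ := exists_open_relIndex m hm A hA hAm N e he he' V hVopen
  obtain ⟨W, hWopen, hWU⟩ := isOpen_induced_iff.mp hUopen
  have h1W : (1:G) ∈ W := by
    have h1U : (1 : ↥N) ∈ (U : Set ↥N) := U.one_mem
    rw [← hWU] at h1U
    simpa using h1U
  obtain ⟨Vc, hVcclopen, h1Vc, hVcsub⟩ :=
    compact_exists_isClopen_in_isOpen (hWopen.inter H.isOpen') ⟨h1W, H.toSubgroup.one_mem⟩
  obtain ⟨H', hH'⟩ :=
    IsTopologicalGroup.exist_openNormalSubgroup_sub_clopen_nhds_of_one hVcclopen h1Vc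
  have hle : H'.toSubgroup ≤ H.toSubgroup := fun x hx => (hVcsub (hH' hx)).2
  refine ⟨H', hle, ?_⟩
  have hsub : H'.toSubgroup.subgroupOf N ≤ U := by
    intro x hx
    have hxW : (x : G) ∈ W := (hVcsub (hH' (Subgroup.mem_subgroupOf.mp hx))).1
    have hxU : x ∈ (U : Set ↥N) := by rw [← hWU]; exact hxW
    exact hxU
  calc m * orderOf (QuotientGroup.mk σ : G ⧸ H.toSubgroup)
      = m * V.index := by rw [orderOf_mk_eq_index N σ hσN hσgen H]
    _ ∣ (U.relIndex V) * V.index := mul_dvd_mul_right hUdvd V.index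
    _ = U.index := Subgroup.relIndex_mul_index hUV
    _ ∣ (H'.toSubgroup.subgroupOf N).index := Subgroup.index_dvd_of_le hsub
    _ = orderOf (QuotientGroup.mk σ : G ⧸ H'.toSubgroup) :=
        (orderOf_mk_eq_index N σ hσN hσgen H').symm

end ImageN



section RLevel

variable {Λ : Type*} [CommRing Λ] {G : Type*} [Group G] [TopologicalSpace G]
  [IsTopologicalGroup G] [CompactSpace G] [T2Space G] [TotallyDisconnectedSpace G]

lemma comp_mul (x y : completedGroupRing Λ G) (H : OpenNormalSubgroup G) :
    (x * y).1 H = x.1 H * y.1 H := rfl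

lemma comp_sub (x y : completedGroupRing Λ G) (H : OpenNormalSubgroup G) :
    (x - y).1 H = x.1 H - y.1 H := rfl

lemma comp_one (H : OpenNormalSubgroup G) :
    (1 : completedGroupRing Λ G).1 H = 1 := rfl

lemma comp_zero (H : OpenNormalSubgroup G) :
    (0 : completedGroupRing Λ G).1 H = 0 := rfl

lemma comp_cgrOf (g : G) (H : OpenNormalSubgroup G) :
    (cgrOf Λ G g).1 H = MonoidAlgebra.single (QuotientGroup.mk g) 1 := rfl

lemma comp_t (σ : G) (H : OpenNormalSubgroup G) :
    ((cgrOf Λ G σ - 1) : completedGroupRing Λ G).1 H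
      = MonoidAlgebra.single (QuotientGroup.mk σ) 1 - 1 := rfl

variable (m : ℕ) (hm : 0 < m) (hmΛ : (m : Λ) = 0)
  (A : Set ℕ) (hA : ∀ ℓ ∈ A, Nat.Prime ℓ) (hAm : ∀ ℓ : ℕ, ℓ.Prime → ℓ ∣ m → ℓ ∈ A)
  (N : Subgroup G)
  (e : ↥N ≃* Multiplicative (ZA A hA)) (he : Continuous e) (he' : Continuous e.symm)
  (σ : G) (hσN : σ ∈ N)
  (hσgen : closure ((Subgroup.zpowers σ : Subgroup G) : Set G) = (N : Set G))

include hm hmΛ hA hAm he he' hσN hσgen in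
lemma nzd_left (r : completedGroupRing Λ G)
    (h : (cgrOf Λ G σ - 1) * r = 0) : r = 0 := by
  apply Subtype.ext; funext H
  obtain ⟨H', hle, hdvd⟩ := exists_deep m hm A hA hAm N e he he' σ hσN hσgen H
  have h1 : (MonoidAlgebra.single (QuotientGroup.mk σ : G ⧸ H'.toSubgroup) (1:Λ) - 1)
      * r.1 H' = 0 := by
    have hc := congrArg (fun z : completedGroupRing Λ G => z.1 H') h
    simp only [comp_mul, comp_t, comp_zero] at hc
    exact hc
  have h2 : MonoidAlgebra.single (QuotientGroup.mk σ : G ⧸ H'.toSubgroup) (1:Λ) * r.1 H'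
      = r.1 H' := by
    rw [sub_mul, one_mul, sub_eq_zero] at h1
    exact h1
  obtain ⟨y, hy⟩ := exists_eq_nuel_mul h2
  have h3 := r.2 H' H hle
  rw [hy, cgrTrans_nuel_mul hmΛ hle σ hdvd y] at h3
  exact h3.symm

include hm hmΛ hA hAm he he' hσN hσgen in
lemma nzd_right (r : completedGroupRing Λ G)
    (h : r * (cgrOf Λ G σ - 1) = 0) : r = 0 := by
  apply Subtype.ext; funext H
  obtain ⟨H', hle, hdvd⟩ := exists_deep m hm A hA hAm N e he he' σ hσN hσgen H
  have h1 : r.1 H' * (MonoidAlgebra.single (QuotientGroup.mk σ : G ⧸ H'.toSubgroup) (1:Λ) - 1)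
      = 0 := by
    have hc := congrArg (fun z : completedGroupRing Λ G => z.1 H') h
    simp only [comp_mul, comp_t, comp_zero] at hc
    exact hc
  have h2 : r.1 H' * MonoidAlgebra.single (QuotientGroup.mk σ : G ⧸ H'.toSubgroup) (1:Λ)
      = r.1 H' := by
    rw [mul_sub, mul_one, sub_eq_zero] at h1
    exact h1
  obtain ⟨y, hy⟩ := exists_eq_mul_nuel h2
  have h3 := r.2 H' H hle
  rw [hy, cgrTrans_mul_nuel hmΛ hle σ hdvd y] at h3
  exact h3.symm

include hm hmΛ hA hAm he he' hσN hσgen in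
lemma patch_left (y : completedGroupRing Λ G)
    (hy : ∀ H : OpenNormalSubgroup G,
      nuel Λ (QuotientGroup.mk σ : G ⧸ H.toSubgroup) * y.1 H = 0) :
    ∃ x : completedGroupRing Λ G, (cgrOf Λ G σ - 1) * x = y := by
  have E := fun H => exists_deep m hm A hA hAm N e he he' σ hσN hσgen H
  choose D hDle hDdvd using E
  have sol0 : ∀ H, ∃ xx, MonoidAlgebra.single
      (QuotientGroup.mk σ : G ⧸ (D H).toSubgroup) (1:Λ) * xx - xx = y.1 (D H) :=
    fun H => exists_solution_left (hy (D H))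
  choose sol hsol using sol0
  have transeq : ∀ {H K : OpenNormalSubgroup G} (h : H.toSubgroup ≤ K.toSubgroup)
      (v : MonoidAlgebra Λ (G ⧸ H.toSubgroup)),
      cgrTrans Λ G h (MonoidAlgebra.single (QuotientGroup.mk σ) (1:Λ) * v - v)
        = MonoidAlgebra.single (QuotientGroup.mk σ) (1:Λ) * cgrTrans Λ G h v
            - cgrTrans Λ G h v := by
    intro H K h v
    rw [map_sub, map_mul, cgrTrans_mk_single]
  have uniq : ∀ (T H' : OpenNormalSubgroup G) (h : H'.toSubgroup ≤ T.toSubgroup),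
      (m * orderOf (QuotientGroup.mk σ : G ⧸ T.toSubgroup)
          ∣ orderOf (QuotientGroup.mk σ : G ⧸ H'.toSubgroup)) →
      ∀ (a b : MonoidAlgebra Λ (G ⧸ H'.toSubgroup)),
      MonoidAlgebra.single (QuotientGroup.mk σ) (1:Λ) * a - a
        = MonoidAlgebra.single (QuotientGroup.mk σ) 1 * b - b →
      cgrTrans Λ G h a = cgrTrans Λ G h b := by
    intro T H' h hd a b hab
    have hk : MonoidAlgebra.single (QuotientGroup.mk σ) (1:Λ) * (a - b) = a - b := by
      have hexp : MonoidAlgebra.single (QuotientGroup.mk σ) (1:Λ) * (a - b) - (a - b)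
          = (MonoidAlgebra.single (QuotientGroup.mk σ) (1:Λ) * a - a)
            - (MonoidAlgebra.single (QuotientGroup.mk σ) (1:Λ) * b - b) := by
        rw [mul_sub]; abel
      rw [hab, sub_self] at hexp
      rw [← sub_eq_zero]; exact hexp
    obtain ⟨z, hz⟩ := exists_eq_nuel_mul hk
    have h0 : cgrTrans Λ G h (a - b) = 0 := by
      rw [hz]; exact cgrTrans_nuel_mul hmΛ h σ hd z
    rw [map_sub, sub_eq_zero] at h0
    exact h0
  set x0 : ∀ H : OpenNormalSubgroup G, MonoidAlgebra Λ (G ⧸ H.toSubgroup) :=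
    fun H => cgrTrans Λ G (hDle H) (sol H) with hx0
  have hcompat : ∀ H K (h : H.toSubgroup ≤ K.toSubgroup), cgrTrans Λ G h (x0 H) = x0 K := by
    intro H K h
    set P := D H ⊓ D K with hPdef
    have hPH : P.toSubgroup ≤ (D H).toSubgroup := inf_le_left
    have hPK : P.toSubgroup ≤ (D K).toSubgroup := inf_le_right
    have hLH : (D P).toSubgroup ≤ (D H).toSubgroup := le_trans (hDle P) hPH
    have hLK : (D P).toSubgroup ≤ (D K).toSubgroup := le_trans (hDle P) hPK
    have hKH : orderOf (QuotientGroup.mk σ : G ⧸ K.toSubgroup)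
        ∣ orderOf (QuotientGroup.mk σ : G ⧸ H.toSubgroup) := mk_orderOf_dvd h σ
    have hbH : MonoidAlgebra.single (QuotientGroup.mk σ) (1:Λ)
          * (cgrTrans Λ G hLH (sol P)) - cgrTrans Λ G hLH (sol P) = y.1 (D H) := by
      rw [← transeq hLH (sol P), hsol P]
      exact y.2 _ _ hLH
    have hbK : MonoidAlgebra.single (QuotientGroup.mk σ) (1:Λ)
          * (cgrTrans Λ G hLK (sol P)) - cgrTrans Λ G hLK (sol P) = y.1 (D K) := by
      rw [← transeq hLK (sol P), hsol P]
      exact y.2 _ _ hLK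
    calc cgrTrans Λ G h (x0 H)
        = cgrTrans Λ G (le_trans (hDle H) h) (sol H) := cgrTrans_trans (hDle H) h (sol H)
      _ = cgrTrans Λ G (le_trans (hDle H) h) (cgrTrans Λ G hLH (sol P)) :=
          uniq K (D H) (le_trans (hDle H) h)
            (dvd_trans (Nat.mul_dvd_mul_left m hKH) (hDdvd H)) _ _
            ((hsol H).trans hbH.symm)
      _ = cgrTrans Λ G (le_trans hLH (le_trans (hDle H) h)) (sol P) :=
          cgrTrans_trans _ _ _
      _ = cgrTrans Λ G (le_trans hLK (hDle K)) (sol P) := rfl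
      _ = cgrTrans Λ G (hDle K) (cgrTrans Λ G hLK (sol P)) := (cgrTrans_trans _ _ _).symm
      _ = cgrTrans Λ G (hDle K) (sol K) :=
          uniq K (D K) (hDle K) (hDdvd K) _ _ (hbK.trans (hsol K).symm)
      _ = x0 K := rfl
  refine ⟨⟨x0, hcompat⟩, ?_⟩
  apply Subtype.ext; funext H
  have hgoal : (MonoidAlgebra.single (QuotientGroup.mk σ) (1:Λ) - 1) * x0 H = y.1 H := by
    rw [sub_mul, one_mul, hx0]
    rw [← transeq (hDle H) (sol H), hsol H]
    exact y.2 _ _ (hDle H)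
  simpa only [comp_mul, comp_t] using hgoal

include hm hmΛ hA hAm he he' hσN hσgen in
lemma patch_right (y : completedGroupRing Λ G)
    (hy : ∀ H : OpenNormalSubgroup G,
      y.1 H * nuel Λ (QuotientGroup.mk σ : G ⧸ H.toSubgroup) = 0) :
    ∃ x : completedGroupRing Λ G, x * (cgrOf Λ G σ - 1) = y := by
  have E := fun H => exists_deep m hm A hA hAm N e he he' σ hσN hσgen H
  choose D hDle hDdvd using E
  have sol0 : ∀ H, ∃ xx, xx * MonoidAlgebra.single
      (QuotientGroup.mk σ : G ⧸ (D H).toSubgroup) (1:Λ) - xx = y.1 (D H) :=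
    fun H => exists_solution_right (hy (D H))
  choose sol hsol using sol0
  have transeq : ∀ {H K : OpenNormalSubgroup G} (h : H.toSubgroup ≤ K.toSubgroup)
      (v : MonoidAlgebra Λ (G ⧸ H.toSubgroup)),
      cgrTrans Λ G h (v * MonoidAlgebra.single (QuotientGroup.mk σ) (1:Λ) - v)
        = cgrTrans Λ G h v * MonoidAlgebra.single (QuotientGroup.mk σ) (1:Λ)
            - cgrTrans Λ G h v := by
    intro H K h v
    rw [map_sub, map_mul, cgrTrans_mk_single]
  have uniq : ∀ (T H' : OpenNormalSubgroup G) (h : H'.toSubgroup ≤ T.toSubgroup),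
      (m * orderOf (QuotientGroup.mk σ : G ⧸ T.toSubgroup)
          ∣ orderOf (QuotientGroup.mk σ : G ⧸ H'.toSubgroup)) →
      ∀ (a b : MonoidAlgebra Λ (G ⧸ H'.toSubgroup)),
      a * MonoidAlgebra.single (QuotientGroup.mk σ) (1:Λ) - a
        = b * MonoidAlgebra.single (QuotientGroup.mk σ) 1 - b →
      cgrTrans Λ G h a = cgrTrans Λ G h b := by
    intro T H' h hd a b hab
    have hk : (a - b) * MonoidAlgebra.single (QuotientGroup.mk σ) (1:Λ) = a - b := by
      have hexp : (a - b) * MonoidAlgebra.single (QuotientGroup.mk σ) (1:Λ) - (a - b)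
          = (a * MonoidAlgebra.single (QuotientGroup.mk σ) (1:Λ) - a)
            - (b * MonoidAlgebra.single (QuotientGroup.mk σ) (1:Λ) - b) := by
        rw [sub_mul]; abel
      rw [hab, sub_self] at hexp
      rw [← sub_eq_zero]; exact hexp
    obtain ⟨z, hz⟩ := exists_eq_mul_nuel hk
    have h0 : cgrTrans Λ G h (a - b) = 0 := by
      rw [hz]; exact cgrTrans_mul_nuel hmΛ h σ hd z
    rw [map_sub, sub_eq_zero] at h0
    exact h0
  set x0 : ∀ H : OpenNormalSubgroup G, MonoidAlgebra Λ (G ⧸ H.toSubgroup) :=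
    fun H => cgrTrans Λ G (hDle H) (sol H) with hx0
  have hcompat : ∀ H K (h : H.toSubgroup ≤ K.toSubgroup), cgrTrans Λ G h (x0 H) = x0 K := by
    intro H K h
    set P := D H ⊓ D K with hPdef
    have hPH : P.toSubgroup ≤ (D H).toSubgroup := inf_le_left
    have hPK : P.toSubgroup ≤ (D K).toSubgroup := inf_le_right
    have hLH : (D P).toSubgroup ≤ (D H).toSubgroup := le_trans (hDle P) hPH
    have hLK : (D P).toSubgroup ≤ (D K).toSubgroup := le_trans (hDle P) hPK
    have hKH : orderOf (QuotientGroup.mk σ : G ⧸ K.toSubgroup)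
        ∣ orderOf (QuotientGroup.mk σ : G ⧸ H.toSubgroup) := mk_orderOf_dvd h σ
    have hbH : (cgrTrans Λ G hLH (sol P)) * MonoidAlgebra.single (QuotientGroup.mk σ) (1:Λ)
          - cgrTrans Λ G hLH (sol P) = y.1 (D H) := by
      rw [← transeq hLH (sol P), hsol P]
      exact y.2 _ _ hLH
    have hbK : (cgrTrans Λ G hLK (sol P)) * MonoidAlgebra.single (QuotientGroup.mk σ) (1:Λ)
          - cgrTrans Λ G hLK (sol P) = y.1 (D K) := by
      rw [← transeq hLK (sol P), hsol P]
      exact y.2 _ _ hLK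
    calc cgrTrans Λ G h (x0 H)
        = cgrTrans Λ G (le_trans (hDle H) h) (sol H) := cgrTrans_trans (hDle H) h (sol H)
      _ = cgrTrans Λ G (le_trans (hDle H) h) (cgrTrans Λ G hLH (sol P)) :=
          uniq K (D H) (le_trans (hDle H) h)
            (dvd_trans (Nat.mul_dvd_mul_left m hKH) (hDdvd H)) _ _
            ((hsol H).trans hbH.symm)
      _ = cgrTrans Λ G (le_trans hLH (le_trans (hDle H) h)) (sol P) :=
          cgrTrans_trans _ _ _
      _ = cgrTrans Λ G (le_trans hLK (hDle K)) (sol P) := rfl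
      _ = cgrTrans Λ G (hDle K) (cgrTrans Λ G hLK (sol P)) := (cgrTrans_trans _ _ _).symm
      _ = cgrTrans Λ G (hDle K) (sol K) :=
          uniq K (D K) (hDle K) (hDdvd K) _ _ (hbK.trans (hsol K).symm)
      _ = x0 K := rfl
  refine ⟨⟨x0, hcompat⟩, ?_⟩
  apply Subtype.ext; funext H
  have hgoal : x0 H * (MonoidAlgebra.single (QuotientGroup.mk σ) (1:Λ) - 1) = y.1 H := by
    rw [mul_sub, mul_one, hx0]
    rw [← transeq (hDle H) (sol H), hsol H]
    exact y.2 _ _ (hDle H)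
  simpa only [comp_mul, comp_t] using hgoal

end RLevel



/-- Let `Λ` be a commutative ring with `mΛ = 0` for some `m > 0`, let
`A` be a set of primes containing all prime divisors of `m`, and let `G` be a profinite
group with a closed normal subgroup `N` isomorphic, as a topological group, to
`ℤ_A = ∏_{ℓ ∈ A} ℤ_ℓ`. Let `σ` be a topological generator of `N`, `R = Λ[[G]]` the
completed group ring, and `t = [σ] - 1 ∈ R`. Then: (i) `t` is a non-zero-divisor in `R`;
(ii) `tR = Rt`; and (iii) `([σ'] - 1)R = tR` for any other topological generator `σ'`
of `N`. -/
theorem stmt5 (Λ : Type*) [CommRing Λ] (m : ℕ) (hm : 0 < m) (hmΛ : (m : Λ) = 0)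
    (A : Set ℕ) (hA : ∀ ℓ ∈ A, Nat.Prime ℓ) (hAm : ∀ ℓ : ℕ, ℓ.Prime → ℓ ∣ m → ℓ ∈ A)
    (G : Type*) [Group G] [TopologicalSpace G] [IsTopologicalGroup G]
    [CompactSpace G] [T2Space G] [TotallyDisconnectedSpace G]
    (N : Subgroup G) [N.Normal] (hNclosed : IsClosed (N : Set G))
    (e : N ≃* Multiplicative (ZA A hA)) (he : Continuous e) (he' : Continuous e.symm)
    (σ : G) (hσN : σ ∈ N)
    (hσgen : closure ((Subgroup.zpowers σ : Subgroup G) : Set G) = (N : Set G)) :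
    -- (i) `t = [σ] - 1` is a non-zero-divisor (on both sides)
    (∀ r : completedGroupRing Λ G, (cgrOf Λ G σ - 1) * r = 0 → r = 0) ∧
    (∀ r : completedGroupRing Λ G, r * (cgrOf Λ G σ - 1) = 0 → r = 0) ∧
    -- (ii) `tR = Rt`
    (Set.range (fun r : completedGroupRing Λ G => (cgrOf Λ G σ - 1) * r) =
      Set.range (fun r : completedGroupRing Λ G => r * (cgrOf Λ G σ - 1))) ∧
    -- (iii) `tR` does not depend on the choice of topological generator of `N`
    (∀ σ' : G, σ' ∈ N →
      closure ((Subgroup.zpowers σ' : Subgroup G) : Set G) = (N : Set G) →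
      Set.range (fun r : completedGroupRing Λ G => (cgrOf Λ G σ' - 1) * r) =
        Set.range (fun r : completedGroupRing Λ G => (cgrOf Λ G σ - 1) * r)) := by
  refine ⟨fun r h => nzd_left m hm hmΛ A hA hAm N e he he' σ hσN hσgen r h,
          fun r h => nzd_right m hm hmΛ A hA hAm N e he he' σ hσN hσgen r h, ?_, ?_⟩
  · -- (ii)
    apply Set.ext
    intro w
    simp only [Set.mem_range]
    constructor
    · rintro ⟨r, rfl⟩
      have hyp : ∀ H : OpenNormalSubgroup G,
          ((cgrOf Λ G σ - 1) * r).1 H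
            * nuel Λ (QuotientGroup.mk σ : G ⧸ H.toSubgroup) = 0 := by
        intro H
        have hcen := nuel_central (Λ := Λ) (zpowers_mk_normal N σ hσN hσgen H) (r.1 H)
        rw [comp_mul, comp_t, mul_assoc, ← hcen, ← mul_assoc, sub_mul, one_mul,
          single_mul_nuel_of_mem (Subgroup.mem_zpowers _), sub_self, zero_mul]
      obtain ⟨x, hx⟩ := patch_right m hm hmΛ A hA hAm N e he he' σ hσN hσgen
        ((cgrOf Λ G σ - 1) * r) hyp
      exact ⟨x, hx⟩
    · rintro ⟨r, rfl⟩
      have hyp : ∀ H : OpenNormalSubgroup G,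
          nuel Λ (QuotientGroup.mk σ : G ⧸ H.toSubgroup)
            * (r * (cgrOf Λ G σ - 1)).1 H = 0 := by
        intro H
        have hcen := nuel_central (Λ := Λ) (zpowers_mk_normal N σ hσN hσgen H) (r.1 H)
        rw [comp_mul, comp_t, ← mul_assoc, hcen, mul_assoc, mul_sub, mul_one,
          nuel_mul_single_of_mem (Subgroup.mem_zpowers _), sub_self, mul_zero]
      obtain ⟨x, hx⟩ := patch_left m hm hmΛ A hA hAm N e he he' σ hσN hσgen
        (r * (cgrOf Λ G σ - 1)) hyp
      exact ⟨x, hx⟩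
  · -- (iii)
    intro σ' hσ'N hσ'gen
    have hmem' : ∀ H : OpenNormalSubgroup G,
        (QuotientGroup.mk σ' : G ⧸ H.toSubgroup)
          ∈ Subgroup.zpowers (QuotientGroup.mk σ : G ⧸ H.toSubgroup) := by
      intro H
      rw [← image_N N σ hσN hσgen H]
      exact ⟨σ', hσ'N, rfl⟩
    have hnueq : ∀ H : OpenNormalSubgroup G,
        nuel Λ (QuotientGroup.mk σ' : G ⧸ H.toSubgroup)
          = nuel Λ (QuotientGroup.mk σ : G ⧸ H.toSubgroup) := by
      intro H
      apply nuel_eq_of_zpowers_eq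
      rw [← image_N N σ' hσ'N hσ'gen H, ← image_N N σ hσN hσgen H]
    apply Set.ext
    intro w
    simp only [Set.mem_range]
    constructor
    · rintro ⟨r, rfl⟩
      have hyp : ∀ H : OpenNormalSubgroup G,
          nuel Λ (QuotientGroup.mk σ : G ⧸ H.toSubgroup)
            * ((cgrOf Λ G σ' - 1) * r).1 H = 0 := by
        intro H
        rw [comp_mul, comp_t, ← mul_assoc, mul_sub, mul_one,
          nuel_mul_single_of_mem (hmem' H), sub_self, zero_mul]
      obtain ⟨x, hx⟩ := patch_left m hm hmΛ A hA hAm N e he he' σ hσN hσgen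
        ((cgrOf Λ G σ' - 1) * r) hyp
      exact ⟨x, hx⟩
    · rintro ⟨r, rfl⟩
      have hyp : ∀ H : OpenNormalSubgroup G,
          nuel Λ (QuotientGroup.mk σ' : G ⧸ H.toSubgroup)
            * ((cgrOf Λ G σ - 1) * r).1 H = 0 := by
        intro H
        rw [hnueq H, comp_mul, comp_t, ← mul_assoc, mul_sub, mul_one,
          nuel_mul_single_of_mem (Subgroup.mem_zpowers _), sub_self, zero_mul]
      obtain ⟨x, hx⟩ := patch_left m hm hmΛ A hA hAm N e he he' σ' hσ'N hσ'gen
        ((cgrOf Λ G σ - 1) * r) hyp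
      exact ⟨x, hx⟩
end Deep
end
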